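/- arXiv:2502.02039 — 9 statements merged into one kernel-verified Lean document; each statement's English description precedes it below -/
import Mathlib

section
/- Let G be a discrete group acting continuously and minimally on an infinite compact Hausdorff space Z. Suppose there exists g ∈ G and points x, y ∈ Z fixed by g such that g has north–south dynamics with respect to x and y. Then the action is a strong boundary action: for every compact subset F ⊆ Z with F ≠ Z and every nonempty open subset O ⊆ Z there exists h ∈ G with h·F ⊆ O. -/
/-- Let `G` be a discrete group acting continuously and minimally on an
infinite compact Hausdorff space `Z`. Suppose there exists `g ∈ G` and points `x, y ∈ Z`
fixed by `g` such that `g` has north–south dynamics with respect to `x` and `y`. Then the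
action is a strong boundary action: for every compact subset `F ⊆ Z` with `F ≠ Z` and
every nonempty open subset `O ⊆ Z` there exists `h ∈ G` with `h • F ⊆ O`. -/
theorem strong_boundary_of_north_south_dynamics
    {G Z : Type*} [Group G] [TopologicalSpace Z] [CompactSpace Z] [T2Space Z] [Infinite Z]
    [MulAction G Z]
    (hcont : ∀ g : G, Continuous fun z : Z => g • z)
    (hmin : ∀ z : Z, Dense (MulAction.orbit G z))
    (g : G) (x y : Z) (hx : g • x = x) (hy : g • y = y)
    (hns : ∀ U V : Set Z, IsOpen U → IsOpen V → x ∈ U → y ∈ V →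
      ∃ m : ℕ, (∀ z ∉ V, g ^ m • z ∈ U) ∧ (∀ z ∉ U, (g ^ m)⁻¹ • z ∈ V)) :
    ∀ F : Set Z, IsCompact F → F ≠ Set.univ → ∀ O : Set Z, IsOpen O → O.Nonempty →
      ∃ h : G, ∀ z ∈ F, h • z ∈ O := by
  intro F hF hFne O hO hOne
  obtain ⟨p, hp⟩ : ∃ p, p ∉ F := by
    by_contra h; push_neg at h; exact hFne (Set.eq_univ_of_forall h)
  obtain ⟨_, ⟨b, rfl⟩, hbO⟩ := (hmin x).exists_mem_open hO hOne
  have hFc : IsOpen Fᶜ := hF.isClosed.isOpen_compl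
  obtain ⟨_, ⟨c, rfl⟩, hcF⟩ := (hmin y).exists_mem_open hFc ⟨p, hp⟩
  set U : Set Z := (fun z : Z => b • z) ⁻¹' O with hU
  have hUopen : IsOpen U := hO.preimage (hcont b)
  set V : Set Z := ((fun z : Z => c⁻¹ • z) '' F)ᶜ with hV
  have hVopen : IsOpen V := ((hF.image (hcont c⁻¹)).isClosed).isOpen_compl
  have hxU : x ∈ U := hbO
  have hyV : y ∈ V := by
    rintro ⟨z, hz, hzy⟩
    have : z = c • y := by rw [← hzy, smul_smul]; simp
    rw [this] at hz
    exact hcF hz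
  obtain ⟨m, hm, -⟩ := hns U V hUopen hVopen hxU hyV
  refine ⟨b * g ^ m * c⁻¹, fun z hz => ?_⟩
  have h1 : c⁻¹ • z ∉ V := by
    simp only [hV, Set.mem_compl_iff, not_not]
    exact ⟨z, hz, rfl⟩
  have h2 := hm _ h1
  simpa [hU, mul_smul] using h2
end

section
/- Let α be a type containing two distinct elements a and b, and let 𝔽 denote the free group on α (utilizing that the rank is at least 2). Let F be a finite set of elements of 𝔽 and let E be a finite set of elements of 𝔽 each of whose reduced words does not end with the letter a or its inverse a⁻¹. Then there exists a nontrivial element g ∈ 𝔽 with g ∉ E, whose reduced word does not end with a or a⁻¹, such that w·g ∉ ⟨a⟩ for every w ∈ F, and g⁻¹·w·g ∉ ⟨a⟩ for every w ∈ F with w ≠ 1, where ⟨a⟩ denotes the cyclic subgroup of 𝔽 generated by the generator corresponding to a. -/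
open ModularGroup in
private lemma sl2_no_commute {k d : ℤ}
    (h : T ^ k * (S * T⁻¹ * S⁻¹) ^ d = (S * T⁻¹ * S⁻¹) ^ d * T ^ k) :
    k = 0 ∨ d = 0 := by
  have hY : (S * T⁻¹ * S⁻¹) ^ d = S * T ^ (-d) * S⁻¹ := by rw [conj_zpow, inv_zpow']
  rw [hY] at h
  have hSinv : (↑(S⁻¹) : Matrix (Fin 2) (Fin 2) ℤ) = !![0, 1; -1, 0] := by
    rw [Matrix.SpecialLinearGroup.coe_inv, coe_S, Matrix.adjugate_fin_two]
    norm_num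
  have hm := congrArg
    (fun M : Matrix.SpecialLinearGroup (Fin 2) ℤ => (↑M : Matrix (Fin 2) (Fin 2) ℤ)) h
  simp only [Matrix.SpecialLinearGroup.coe_mul, coe_T_zpow, coe_S, hSinv,
    Matrix.mul_fin_two] at hm
  have h00 := congrFun (congrFun hm 0) 0
  simp at h00
  exact h00

private lemma fg_no_commute {α : Type*} [DecidableEq α] {a b : α} (hab : a ≠ b) {k d : ℤ}
    (h : FreeGroup.of a ^ k * FreeGroup.of b ^ d = FreeGroup.of b ^ d * FreeGroup.of a ^ k) :
    k = 0 ∨ d = 0 := by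
  let φ : FreeGroup α →* Matrix.SpecialLinearGroup (Fin 2) ℤ :=
    FreeGroup.lift (fun x => if x = a then ModularGroup.T
      else if x = b then ModularGroup.S * ModularGroup.T⁻¹ * ModularGroup.S⁻¹ else 1)
  have ha : φ (FreeGroup.of a) = ModularGroup.T := by simp [φ]
  have hb : φ (FreeGroup.of b) = ModularGroup.S * ModularGroup.T⁻¹ * ModularGroup.S⁻¹ := by
    simp [φ, hab.symm]
  apply sl2_no_commute (k := k) (d := d)
  have h2 := congrArg φ h
  simpa only [map_mul, map_zpow, ha, hb] using h2

/-- Let `α` contain two distinct elements `a` and `b`, and let `𝔽` be the free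
group on `α`. Let `F` be a finite set of elements of `𝔽` and `E` a finite set of elements of `𝔽`
whose reduced words do not end with the letter `a` or its inverse `a⁻¹`. Then there exists a
nontrivial `g ∈ 𝔽` with `g ∉ E`, whose reduced word does not end with `a` or `a⁻¹`, such that
`w * g ∉ ⟨a⟩` for every `w ∈ F`, and `g⁻¹ * w * g ∉ ⟨a⟩` for every `w ∈ F` with `w ≠ 1`. -/
theorem freeGroup_avoid_cyclic_subgroup
    {α : Type*} [DecidableEq α] (a b : α) (hab : a ≠ b)
    (F E : Finset (FreeGroup α))
    (hE : ∀ w ∈ E, ∀ l ∈ (FreeGroup.toWord w).getLast?, l.1 ≠ a) :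
    ∃ g : FreeGroup α, g ≠ 1 ∧ g ∉ E ∧
      (∀ l ∈ (FreeGroup.toWord g).getLast?, l.1 ≠ a) ∧
      (∀ w ∈ F, w * g ∉ Subgroup.zpowers (FreeGroup.of a)) ∧
      (∀ w ∈ F, w ≠ 1 → g⁻¹ * w * g ∉ Subgroup.zpowers (FreeGroup.of a)) := by
  classical
  -- characters
  let χa : FreeGroup α →* Multiplicative ℤ :=
    FreeGroup.lift (fun x => if x = a then Multiplicative.ofAdd 1 else 1)
  let χb : FreeGroup α →* Multiplicative ℤ :=
    FreeGroup.lift (fun x => if x = b then Multiplicative.ofAdd 1 else 1)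
  have hχab : χa (FreeGroup.of b) = 1 := by simp [χa, hab.symm]
  have hχbb : χb (FreeGroup.of b) = Multiplicative.ofAdd 1 := by simp [χb]
  have hχba : χb (FreeGroup.of a) = 1 := by simp [χb, hab]
  have hχaa : χa (FreeGroup.of a) = Multiplicative.ofAdd 1 := by simp [χa]
  have hχa_pow : ∀ k : ℤ, χa (FreeGroup.of a ^ k) = Multiplicative.ofAdd k := by
    intro k; rw [map_zpow, hχaa, ← ofAdd_zsmul, smul_eq_mul, mul_one]
  have hχb_powa : ∀ k : ℤ, χb (FreeGroup.of a ^ k) = 1 := by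
    intro k; rw [map_zpow, hχba, one_zpow]
  have hχa_powb : ∀ n : ℕ, χa (FreeGroup.of b ^ n) = 1 := by
    intro n; rw [map_pow, hχab, one_pow]
  have hχb_powb : ∀ n : ℕ, χb (FreeGroup.of b ^ n) = Multiplicative.ofAdd (n : ℤ) := by
    intro n; rw [map_pow, hχbb, ← ofAdd_nsmul, nsmul_eq_mul, mul_one]
  have hinj : Function.Injective (fun n : ℕ => FreeGroup.of b ^ n) := by
    intro n m h
    have := congrArg χb h
    simp only [hχb_powb] at this
    exact_mod_cast Multiplicative.ofAdd.injective this
  -- bad sets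
  have hfin1 : {n : ℕ | FreeGroup.of b ^ n ∈ (E : Set (FreeGroup α))}.Finite :=
    Set.Finite.preimage hinj.injOn E.finite_toSet
  have hfin2 : ∀ w : FreeGroup α,
      {n : ℕ | ∃ k : ℤ, w * FreeGroup.of b ^ n = FreeGroup.of a ^ k}.Finite := by
    intro w
    apply Set.Subsingleton.finite
    rintro n ⟨k, hk⟩ m ⟨j, hj⟩
    have h1 := congrArg χb hk
    have h2 := congrArg χb hj
    simp only [map_mul, hχb_powb, hχb_powa] at h1 h2
    have : Multiplicative.ofAdd (n : ℤ) = Multiplicative.ofAdd (m : ℤ) :=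
      mul_left_cancel (h1.trans h2.symm)
    exact_mod_cast Multiplicative.ofAdd.injective this
  have hfin3 : ∀ w : FreeGroup α, w ≠ 1 →
      {n : ℕ | ∃ k : ℤ, (FreeGroup.of b ^ n)⁻¹ * w * FreeGroup.of b ^ n
        = FreeGroup.of a ^ k}.Finite := by
    intro w hw
    apply Set.Subsingleton.finite
    rintro n ⟨k, hk⟩ m ⟨j, hj⟩
    -- exponents agree
    have h1 := congrArg χa hk
    have h2 := congrArg χa hj
    simp only [map_mul, map_inv, hχa_powb, hχa_pow, inv_one, one_mul, mul_one] at h1 h2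
    have hkj : k = j := Multiplicative.ofAdd.injective (h1.symm.trans h2)
    subst hkj
    -- w is determined two ways
    have hw1 : w = FreeGroup.of b ^ n * FreeGroup.of a ^ k * (FreeGroup.of b ^ n)⁻¹ := by
      rw [← hk]; group
    have hw2 : w = FreeGroup.of b ^ m * FreeGroup.of a ^ k * (FreeGroup.of b ^ m)⁻¹ := by
      rw [← hj]; group
    have key : FreeGroup.of a ^ k * FreeGroup.of b ^ ((n : ℤ) - m)
        = FreeGroup.of b ^ ((n : ℤ) - m) * FreeGroup.of a ^ k := by
      have h3 : FreeGroup.of b ^ ((n : ℤ) - m)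
          = (FreeGroup.of b ^ m)⁻¹ * FreeGroup.of b ^ n := by
        rw [zpow_sub, zpow_natCast, zpow_natCast]; group
      rw [h3]
      have heq := hw1.symm.trans hw2
      calc FreeGroup.of a ^ k * ((FreeGroup.of b ^ m)⁻¹ * FreeGroup.of b ^ n)
          = (FreeGroup.of b ^ m)⁻¹ * (FreeGroup.of b ^ m * FreeGroup.of a ^ k *
              (FreeGroup.of b ^ m)⁻¹) * FreeGroup.of b ^ n := by group
        _ = (FreeGroup.of b ^ m)⁻¹ * (FreeGroup.of b ^ n * FreeGroup.of a ^ k *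
              (FreeGroup.of b ^ n)⁻¹) * FreeGroup.of b ^ n := by rw [heq]
        _ = (FreeGroup.of b ^ m)⁻¹ * FreeGroup.of b ^ n * FreeGroup.of a ^ k := by group
    rcases fg_no_commute hab key with h | h
    · exfalso; apply hw; rw [hw1, h]; group
    · have : (n : ℤ) = m := by linarith [sub_eq_zero.mp h]
      exact_mod_cast this
  -- total bad set
  set B : Set ℕ := {n : ℕ | FreeGroup.of b ^ n ∈ (E : Set (FreeGroup α))} ∪
      (⋃ w ∈ F, {n : ℕ | ∃ k : ℤ, w * FreeGroup.of b ^ n = FreeGroup.of a ^ k}) ∪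
      (⋃ w ∈ F.filter (· ≠ 1),
        {n : ℕ | ∃ k : ℤ, (FreeGroup.of b ^ n)⁻¹ * w * FreeGroup.of b ^ n
          = FreeGroup.of a ^ k}) ∪ {0} with hB
  have hBfin : B.Finite := by
    refine (((hfin1.union ?_).union ?_).union (Set.finite_singleton 0))
    · exact Set.Finite.biUnion F.finite_toSet (fun w _ => hfin2 w)
    · exact Set.Finite.biUnion (F.filter (· ≠ 1)).finite_toSet
        (fun w hw => hfin3 w (by simpa using (Finset.mem_filter.mp hw).2))
  obtain ⟨n, hn⟩ := hBfin.infinite_compl.nonempty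
  simp only [Set.mem_compl_iff, hB, Set.mem_union, Set.mem_setOf_eq, Set.mem_singleton_iff,
    Set.mem_iUnion, not_or, not_exists] at hn
  obtain ⟨⟨⟨hnE, hn2⟩, hn3⟩, hn0⟩ := hn
  refine ⟨FreeGroup.of b ^ n, ?_, ?_, ?_, ?_, ?_⟩
  · intro h
    apply hn0
    have := congrArg χb h
    rw [hχb_powb, map_one] at this
    exact_mod_cast Multiplicative.ofAdd.injective this
  · exact hnE
  · intro l hl
    rw [FreeGroup.toWord_of_pow] at hl
    have := List.eq_of_mem_replicate (List.mem_of_mem_getLast? hl)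
    rw [this]
    exact hab.symm
  · intro w hw hmem
    obtain ⟨k, hk⟩ := Subgroup.mem_zpowers_iff.mp hmem
    exact hn2 w hw k hk.symm
  · intro w hw hw1 hmem
    obtain ⟨k, hk⟩ := Subgroup.mem_zpowers_iff.mp hmem
    refine hn3 w ?_ k hk.symm
    simp [hw, hw1]
end

section
/- Let G be a group and ι : F₂ → G an injective group homomorphism, where F₂ is the free group on two generators x₀ and x₁; set a = ι(x₀). Let R₁ ⊆ F₂ be the set of all elements whose reduced word does not end with x₀ or x₀⁻¹, and let R₂ ⊆ G be a left transversal of the subgroup ι(F₂) in G containing 1 (i.e., every g ∈ G can be written uniquely as g = r·ι(w) with r ∈ R₂ and w ∈ F₂). Set Σ = {r·ι(w) : r ∈ R₂, w ∈ R₁}. Then for every finite subset F ⊆ G and every finite subset E ⊆ Σ there exists g ∈ Σ with g ∉ E such that f·g ∉ ⟨a⟩ for all f ∈ F, and g⁻¹·f·g ∉ ⟨a⟩ for all f ∈ F with f ≠ 1, where ⟨a⟩ is the cyclic subgroup of G generated by a. -/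
/-- The set `Σ = {r·ι(w) : r ∈ R₂, w ∈ R₁}`, where `R₁` is the set of elements of the free
group on two generators whose reduced word does not end with the generator `x₀ = 0` or its
inverse. -/
def transversalWordSet {G : Type*} [Group G] (ι : FreeGroup (Fin 2) →* G) (R₂ : Set G) :
    Set G :=
  {g : G | ∃ r ∈ R₂, ∃ w : FreeGroup (Fin 2),
    (∀ l ∈ (FreeGroup.toWord w).getLast?, l.1 ≠ 0) ∧ g = r * ι w}

section Aux

lemma reduce_rep_append {α : Type*} [DecidableEq α] (x y : α × Bool) (hxy : x.1 ≠ y.1) :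
    ∀ m n : ℕ, FreeGroup.reduce (List.replicate m x ++ List.replicate n y)
      = List.replicate m x ++ List.replicate n y := by
  intro m n
  induction m with
  | zero => simp
  | succ m ih =>
    rw [List.replicate_succ, List.cons_append, FreeGroup.reduce.cons, ih]
    cases m with
    | zero =>
      cases n with
      | zero => simp
      | succ n => simp [List.replicate_succ, hxy]
    | succ m => simp [List.replicate_succ]

lemma of_pow_mul_of_pow_toWord {i j : Fin 2} (hij : i ≠ j) (m n : ℕ) :
    (FreeGroup.of i ^ m * FreeGroup.of j ^ n).toWord
      = List.replicate m (i, true) ++ List.replicate n (j, true) := by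
  have h1 : FreeGroup.of i ^ m = FreeGroup.mk (List.replicate m ((i : Fin 2), true)) := by
    rw [← FreeGroup.mk_toWord (x := FreeGroup.of i ^ m), FreeGroup.toWord_of_pow]
  have h2 : FreeGroup.of j ^ n = FreeGroup.mk (List.replicate n ((j : Fin 2), true)) := by
    rw [← FreeGroup.mk_toWord (x := FreeGroup.of j ^ n), FreeGroup.toWord_of_pow]
  rw [h1, h2, FreeGroup.mul_mk, FreeGroup.toWord_mk,
    reduce_rep_append _ _ (by simpa using hij)]

lemma not_commute_of_pow {i j : Fin 2} (hij : i ≠ j) {m n : ℕ} (hm : m ≠ 0) (hn : n ≠ 0) :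
    FreeGroup.of i ^ m * FreeGroup.of j ^ n ≠ FreeGroup.of j ^ n * FreeGroup.of i ^ m := by
  intro h
  have this : (FreeGroup.of i ^ m * FreeGroup.of j ^ n).toWord.head?
      = (FreeGroup.of j ^ n * FreeGroup.of i ^ m).toWord.head? := by rw [h]
  rw [of_pow_mul_of_pow_toWord hij, of_pow_mul_of_pow_toWord hij.symm] at this
  obtain ⟨m, rfl⟩ := Nat.exists_eq_succ_of_ne_zero hm
  obtain ⟨n, rfl⟩ := Nat.exists_eq_succ_of_ne_zero hn
  simp [List.replicate_succ] at this
  exact hij this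

lemma not_commute_of_zpow {i j : Fin 2} (hij : i ≠ j) {p q : ℤ} (hp : p ≠ 0) (hq : q ≠ 0)
    (h : Commute (FreeGroup.of i ^ p) (FreeGroup.of j ^ q)) : False := by
  have h1 : Commute (FreeGroup.of i ^ ((p.natAbs : ℤ))) (FreeGroup.of j ^ ((q.natAbs : ℤ))) := by
    obtain ep | ep : (p.natAbs : ℤ) = p ∨ (p.natAbs : ℤ) = -p := by omega
    all_goals obtain eq | eq : (q.natAbs : ℤ) = q ∨ (q.natAbs : ℤ) = -q := by omega
    all_goals rw [ep, eq]
    · exact h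
    · rw [zpow_neg]; exact h.inv_right
    · rw [zpow_neg]; exact h.inv_left
    · rw [zpow_neg, zpow_neg]; exact h.inv_left.inv_right
  rw [zpow_natCast, zpow_natCast] at h1
  exact not_commute_of_pow hij (by simpa using hp) (by simpa using hq) h1.eq

noncomputable def piF (i : Fin 2) : FreeGroup (Fin 2) →* Multiplicative ℤ :=
  FreeGroup.lift (fun j => if j = i then Multiplicative.ofAdd 1 else 1)

lemma piF_zpow_self (i : Fin 2) (p : ℤ) :
    piF i (FreeGroup.of i ^ p) = Multiplicative.ofAdd p := by
  rw [map_zpow, piF, FreeGroup.lift_apply_of, if_pos rfl, ← ofAdd_zsmul, smul_eq_mul, mul_one]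

lemma piF_zpow_ne {i j : Fin 2} (h : j ≠ i) (p : ℤ) :
    piF i (FreeGroup.of j ^ p) = 1 := by
  rw [map_zpow, piF, FreeGroup.lift_apply_of, if_neg h, one_zpow]

lemma of_zpow_eq_of_zpow' {p q : ℤ}
    (h : FreeGroup.of (0 : Fin 2) ^ p = FreeGroup.of (1 : Fin 2) ^ q) : p = 0 ∧ q = 0 := by
  constructor
  · have h1 := congrArg (piF 0) h
    rw [piF_zpow_self, piF_zpow_ne (by decide)] at h1
    have := congrArg Multiplicative.toAdd h1
    simpa using this
  · have h1 := congrArg (piF 1) h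
    rw [piF_zpow_self, piF_zpow_ne (by decide)] at h1
    have := congrArg Multiplicative.toAdd h1
    simpa using this.symm

lemma of_one_zpow_inj {p q : ℤ}
    (h : FreeGroup.of (1 : Fin 2) ^ p = FreeGroup.of (1 : Fin 2) ^ q) : p = q := by
  have h1 := congrArg (piF 1) h
  rw [piF_zpow_self, piF_zpow_self] at h1
  have := congrArg Multiplicative.toAdd h1
  simpa using this

lemma conj_rigid {k l N M : ℤ} (hk : k ≠ 0)
    (h : FreeGroup.of (1 : Fin 2) ^ N * FreeGroup.of (0 : Fin 2) ^ k
          * FreeGroup.of (1 : Fin 2) ^ (-N)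
       = FreeGroup.of (1 : Fin 2) ^ M * FreeGroup.of (0 : Fin 2) ^ l
          * FreeGroup.of (1 : Fin 2) ^ (-M)) :
    N = M ∧ k = l := by
  have hkl : k = l := by
    have h1 := congrArg (piF 0) h
    simp only [map_mul, piF_zpow_self,
      piF_zpow_ne (show (1 : Fin 2) ≠ 0 by decide), one_mul, mul_one] at h1
    have := congrArg Multiplicative.toAdd h1
    simpa using this
  subst hkl
  refine ⟨?_, rfl⟩
  by_contra hne
  have hd : N - M ≠ 0 := sub_ne_zero.mpr hne
  have e2 : FreeGroup.of (1 : Fin 2) ^ (N - M) * FreeGroup.of (0 : Fin 2) ^ k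
      * FreeGroup.of (1 : Fin 2) ^ (M - N) = FreeGroup.of (0 : Fin 2) ^ k := by
    have estep : FreeGroup.of (1 : Fin 2) ^ (N - M) * FreeGroup.of (0 : Fin 2) ^ k
        * FreeGroup.of (1 : Fin 2) ^ (M - N)
        = FreeGroup.of (1 : Fin 2) ^ (-M)
          * (FreeGroup.of (1 : Fin 2) ^ N * FreeGroup.of (0 : Fin 2) ^ k
            * FreeGroup.of (1 : Fin 2) ^ (-N)) * FreeGroup.of (1 : Fin 2) ^ M := by
      group
    rw [estep, h]
    group
  have e3 : Commute (FreeGroup.of (0 : Fin 2) ^ k) (FreeGroup.of (1 : Fin 2) ^ (N - M)) := by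
    unfold Commute SemiconjBy
    conv_lhs => rw [← e2]
    group
  exact not_commute_of_zpow (by decide) hk hd e3

end Aux

/-- Let `G` be a group and `ι : F₂ → G` an injective homomorphism from the
free group on two generators `x₀, x₁`; set `a = ι x₀`. Let `R₁ ⊆ F₂` be the elements whose
reduced word does not end with `x₀` or `x₀⁻¹`, let `R₂ ⊆ G` be a left transversal of `ι(F₂)`
in `G` containing `1`, and let `Σ = {r·ι(w) : r ∈ R₂, w ∈ R₁}`. Then for all finite
`F ⊆ G` and finite `E ⊆ Σ` there is `g ∈ Σ \ E` with `f·g ∉ ⟨a⟩` for all `f ∈ F` and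
`g⁻¹·f·g ∉ ⟨a⟩` for all `f ∈ F`, `f ≠ 1`. -/
theorem transversalWordSet_avoid_cyclic_subgroup
    {G : Type*} [Group G] (ι : FreeGroup (Fin 2) →* G) (hι : Function.Injective ι)
    (R₂ : Set G) (hone : (1 : G) ∈ R₂)
    (htrans : ∀ g : G, ∃! p : R₂ × FreeGroup (Fin 2), g = (p.1 : G) * ι p.2)
    (F E : Finset G)
    (hE : ∀ x ∈ E, x ∈ transversalWordSet ι R₂) :
    ∃ g ∈ transversalWordSet ι R₂, g ∉ E ∧
      (∀ f ∈ F, f * g ∉ Subgroup.zpowers (ι (FreeGroup.of 0))) ∧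
      (∀ f ∈ F, f ≠ 1 → g⁻¹ * f * g ∉ Subgroup.zpowers (ι (FreeGroup.of 0))) := by
  classical
  set b : FreeGroup (Fin 2) := FreeGroup.of 1 with hb
  set g : ℕ → G := fun n => ι (b ^ ((n : ℤ) + 1)) with hgdef
  have hcast : ∀ n : ℕ, b ^ ((n : ℤ) + 1) = b ^ (n + 1) := fun n => by
    rw [← zpow_natCast]; norm_cast
  -- membership in Σ
  have hmem : ∀ n, g n ∈ transversalWordSet ι R₂ := by
    intro n
    refine ⟨1, hone, b ^ (n + 1), ?_, by rw [one_mul, hgdef]; simp only; rw [hcast]⟩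
    intro l hl
    rw [hb, FreeGroup.toWord_of_pow] at hl
    have hmem' : l ∈ List.replicate (n + 1) ((1 : Fin 2), true) :=
      List.mem_of_mem_getLast? hl
    rw [List.eq_of_mem_replicate hmem']
    decide
  -- injectivity
  have hginj : Function.Injective g := by
    intro n m h
    have h3 := hι h
    have h4 := of_one_zpow_inj h3
    omega
  -- finitely many bad indices
  have hS0 : {n : ℕ | g n ∈ E}.Finite := Set.Finite.preimage hginj.injOn E.finite_toSet
  have hS1 : ∀ f : G, {n : ℕ | f * g n ∈ Subgroup.zpowers (ι (FreeGroup.of 0))}.Subsingleton := by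
    intro f n hn m hm
    obtain ⟨k, hk⟩ := Subgroup.mem_zpowers_iff.mp hn
    obtain ⟨l, hl⟩ := Subgroup.mem_zpowers_iff.mp hm
    have e1 : ι (FreeGroup.of 0 ^ (l - k)) = ι (b ^ ((m : ℤ) - n)) := by
      rw [map_zpow, map_zpow, sub_eq_neg_add, zpow_add, zpow_neg, hk, hl, hgdef]
      simp only [map_zpow]
      group
    have e2 := of_zpow_eq_of_zpow' (hι e1)
    omega
  have hS2 : ∀ f : G, f ≠ 1 →
      {n : ℕ | (g n)⁻¹ * f * g n ∈ Subgroup.zpowers (ι (FreeGroup.of 0))}.Subsingleton := by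
    intro f hf n hn m hm
    obtain ⟨k, hk⟩ := Subgroup.mem_zpowers_iff.mp hn
    obtain ⟨l, hl⟩ := Subgroup.mem_zpowers_iff.mp hm
    have hk0 : k ≠ 0 := by
      rintro rfl
      apply hf
      rw [zpow_zero] at hk
      calc f = g n * ((g n)⁻¹ * f * g n) * (g n)⁻¹ := by group
        _ = 1 := by rw [← hk]; group
    have e1 : ι (b ^ ((n : ℤ) + 1) * FreeGroup.of 0 ^ k * b ^ (-((n : ℤ) + 1)))
        = ι (b ^ ((m : ℤ) + 1) * FreeGroup.of 0 ^ l * b ^ (-((m : ℤ) + 1))) := by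
      have eL : ι (b ^ ((n : ℤ) + 1) * FreeGroup.of 0 ^ k * b ^ (-((n : ℤ) + 1))) = f := by
        simp only [map_mul, map_zpow]
        rw [hk, hgdef]
        simp only [map_zpow]
        group
      have eR : ι (b ^ ((m : ℤ) + 1) * FreeGroup.of 0 ^ l * b ^ (-((m : ℤ) + 1))) = f := by
        simp only [map_mul, map_zpow]
        rw [hl, hgdef]
        simp only [map_zpow]
        group
      rw [eL, eR]
    have e2 := conj_rigid hk0 (hι e1)
    omega
  -- pick a good index
  have hbad : ({n : ℕ | g n ∈ E} ∪
      (⋃ f ∈ F, {n : ℕ | f * g n ∈ Subgroup.zpowers (ι (FreeGroup.of 0))}) ∪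
      (⋃ f ∈ (F.erase 1),
        {n : ℕ | (g n)⁻¹ * f * g n ∈ Subgroup.zpowers (ι (FreeGroup.of 0))})).Finite := by
    refine ((hS0.union ?_).union ?_)
    · exact Set.Finite.biUnion F.finite_toSet fun f _ => (hS1 f).finite
    · exact Set.Finite.biUnion (F.erase 1).finite_toSet
        fun f hf => (hS2 f (Finset.ne_of_mem_erase hf)).finite
  obtain ⟨n, hn⟩ := hbad.infinite_compl.nonempty
  simp only [Set.compl_union, Set.mem_inter_iff, Set.mem_compl_iff, Set.mem_setOf_eq,
    Set.mem_iUnion, not_exists] at hn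
  refine ⟨g n, hmem n, hn.1.1, ?_, ?_⟩
  · intro f hfF hmem'
    exact hn.1.2 f hfF hmem'
  · intro f hfF hf1 hmem'
    exact hn.2 f (Finset.mem_erase.mpr ⟨hf1, hfF⟩) hmem'
end

section
/- Let m₁, n₁, m₂, n₂ be integers with (m₁,n₁) ≠ (0,0) and (m₂,n₂) ≠ (0,0), and suppose |m₁| ≠ |m₂| or |n₁| ≠ |n₂|. Write the group ℤ² additively, set p = (m₁,n₁) and q = (m₂,n₂), let A = ℤ·p and B = ℤ·q be the infinite cyclic subgroups they generate, and let φ : A → B be a group isomorphism with φ(p) = q. Let G* be the HNN extension of ℤ² with respect to (A, B, φ), with canonical embedding ι : ℤ² → G* and stable letter t satisfying t⁻¹·ι(v)·t = ι(φ(v)) for all v ∈ A. Then for every finite set S of nonzero integers there exists g ∈ G* such that for every x ∈ S, the element g·ι(x·p)·g⁻¹ does not belong to ι(A). -/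
open Multiplicative HNNExtension

lemma britton_conj {G : Type*} [Group G] {A B : Subgroup G} (φ : A ≃* B) (u : ℤˣ) (j : ℕ)
    (c : G) (hc : c ∉ toSubgroup A B u) :
    (t ^ (u : ℤ)) ^ (j + 1) * of c * ((t ^ (u : ℤ)) ^ (j + 1))⁻¹ ∉
      (of : G →* HNNExtension G A B φ).range := by
  intro hmem
  set l : List (ℤˣ × G) :=
    List.replicate j (u, 1) ++ (u, c) :: List.replicate (j + 1) (-u, 1) with hl
  have hchain : l.Chain' (fun a b => a.2 ∈ toSubgroup A B a.1 → a.1 = b.1) := by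
    refine List.IsChain.append (List.isChain_replicate_of_rel _ (fun _ => rfl)) ?_ ?_
    · refine List.isChain_cons.2 ⟨fun y _ h => absurd h hc,
        List.isChain_replicate_of_rel _ (fun _ => rfl)⟩
    · intro x hx y hy
      have hx' : x = (u, 1) := by
        rcases List.mem_replicate.1 (List.mem_of_mem_getLast? hx) with ⟨_, rfl⟩; rfl
      have hy' : y = (u, c) := by simpa using hy.symm
      subst hx'; subst hy'; exact fun _ => rfl
  set w : NormalWord.ReducedWord G A B := ⟨1, l, hchain⟩ with hw
  have hprod : w.prod φ = (t ^ (u : ℤ)) ^ (j + 1) * of c * ((t ^ (u : ℤ)) ^ (j + 1))⁻¹ := by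
    have hneg : ((-u : ℤˣ) : ℤ) = -(u : ℤ) := Units.val_neg u
    simp only [hw, NormalWord.ReducedWord.prod, hl, List.map_append, List.map_cons,
      List.map_replicate, List.prod_append, List.prod_cons, List.prod_replicate, map_one,
      mul_one, hneg, zpow_neg, inv_pow, map_one, one_mul]
    group
  have := ReducedWord.toList_eq_nil_of_mem_of_range φ w (by rw [hprod]; exact hmem)
  simp [hw, hl] at this


/-- Let `m₁, n₁, m₂, n₂` be integers with `(m₁,n₁) ≠ (0,0)` and
`(m₂,n₂) ≠ (0,0)`, and `|m₁| ≠ |m₂|` or `|n₁| ≠ |n₂|`. Set `p = (m₁,n₁)`, `q = (m₂,n₂)`,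
`A = ℤ·p`, `B = ℤ·q`, and let `φ : A ≃* B` with `φ p = q`. Let `G*` be the HNN extension
of `ℤ²` with respect to `(A, B, φ)`, with embedding `ι` and stable letter `t` satisfying
`t⁻¹·ι(v)·t = ι(φ v)` for `v ∈ A` (realized as Mathlib's `HNNExtension _ B A φ.symm`).
Then for every finite set `S` of nonzero integers there exists `g ∈ G*` such that
`g·ι(x • p)·g⁻¹ ∉ ι(A)` for every `x ∈ S`. -/
theorem hnn_extension_Z2_conjugate_out_of_edge_subgroup
    (m₁ n₁ m₂ n₂ : ℤ) (hp : (m₁, n₁) ≠ (0, 0)) (hq : (m₂, n₂) ≠ (0, 0))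
    (habs : |m₁| ≠ |m₂| ∨ |n₁| ≠ |n₂|)
    (A B : Subgroup (Multiplicative (ℤ × ℤ)))
    (hA : A = Subgroup.zpowers (ofAdd (m₁, n₁)))
    (hB : B = Subgroup.zpowers (ofAdd (m₂, n₂)))
    (φ : A ≃* B)
    (hφ : ∀ a : A, (a : Multiplicative (ℤ × ℤ)) = ofAdd (m₁, n₁) →
      ((φ a : B) : Multiplicative (ℤ × ℤ)) = ofAdd (m₂, n₂))
    (S : Finset ℤ) (hS : ∀ x ∈ S, x ≠ 0) :
    ∃ g : HNNExtension (Multiplicative (ℤ × ℤ)) B A φ.symm,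
      ∀ x ∈ S, g * HNNExtension.of (ofAdd (x • (m₁, n₁))) * g⁻¹ ∉
        A.map (HNNExtension.of :
          Multiplicative (ℤ × ℤ) →* HNNExtension (Multiplicative (ℤ × ℤ)) B A φ.symm) := by
  set G := Multiplicative (ℤ × ℤ)
  set p : ℤ × ℤ := (m₁, n₁) with hpdef
  set q : ℤ × ℤ := (m₂, n₂) with hqdef
  set ι : G →* HNNExtension G B A φ.symm := HNNExtension.of
  -- basic membership facts
  have hmemA : ∀ y : ℤ, ofAdd (y • p) ∈ A := fun y => by
    rw [hA, ofAdd_zsmul]; exact zpow_mem (Subgroup.mem_zpowers _) y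
  have hmemB : ∀ z : ℤ, ofAdd (z • q) ∈ B := fun z => by
    rw [hB, ofAdd_zsmul]; exact zpow_mem (Subgroup.mem_zpowers _) z
  set g₀ : A := ⟨ofAdd p, by simpa using hmemA 1⟩ with hg₀
  have hg₀' : ((φ g₀ : B) : G) = ofAdd q := hφ g₀ rfl
  have hgen : ∀ y : ℤ, (⟨ofAdd (y • p), hmemA y⟩ : A) = g₀ ^ y := fun y =>
    Subtype.ext (by rw [SubgroupClass.coe_zpow]; exact ofAdd_zsmul y p)
  have hgenB : ∀ z : ℤ, (⟨ofAdd (z • q), hmemB z⟩ : B) = (φ g₀) ^ z := fun z =>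
    Subtype.ext (by rw [SubgroupClass.coe_zpow, hg₀']; exact ofAdd_zsmul z q)
  have hφpow : ∀ y : ℤ, ((φ ⟨ofAdd (y • p), hmemA y⟩ : B) : G) = ofAdd (y • q) := by
    intro y
    rw [hgen y, map_zpow, SubgroupClass.coe_zpow, hg₀']
    exact (ofAdd_zsmul y q).symm
  have hψpow : ∀ z : ℤ, ((φ.symm ⟨ofAdd (z • q), hmemB z⟩ : A) : G) = ofAdd (z • p) := by
    intro z
    rw [hgenB z, map_zpow, MulEquiv.symm_apply_apply, SubgroupClass.coe_zpow]
    exact (ofAdd_zsmul z p).symm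
  -- conjugation steps
  have step1 : ∀ y : ℤ, t⁻¹ * ι (ofAdd (y • p)) * t = ι (ofAdd (y • q)) := by
    intro y
    have := equiv_symm_eq_conj (φ := φ.symm) (⟨ofAdd (y • p), hmemA y⟩ : A)
    rw [MulEquiv.symm_symm] at this
    rw [← this, hφpow]
  have step2 : ∀ z : ℤ, t * ι (ofAdd (z • q)) * t⁻¹ = ι (ofAdd (z • p)) := by
    intro z
    have := equiv_eq_conj (φ := φ.symm) (⟨ofAdd (z • q), hmemB z⟩ : B)
    rw [← this, hψpow]
  -- extraction of exponents
  have hextA : ∀ v : ℤ × ℤ, ofAdd v ∈ A → ∃ z : ℤ, z • p = v := by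
    intro v hv
    rw [hA, Subgroup.mem_zpowers_iff] at hv
    obtain ⟨z, hz⟩ := hv
    exact ⟨z, by rwa [← ofAdd_zsmul, Equiv.apply_eq_iff_eq] at hz⟩
  have hextB : ∀ v : ℤ × ℤ, ofAdd v ∈ B → ∃ z : ℤ, z • q = v := by
    intro v hv
    rw [hB, Subgroup.mem_zpowers_iff] at hv
    obtain ⟨z, hz⟩ := hv
    exact ⟨z, by rwa [← ofAdd_zsmul, Equiv.apply_eq_iff_eq] at hz⟩
  -- not in image lemma
  have hnotmem : ∀ v : ℤ × ℤ, ofAdd v ∉ A → ι (ofAdd v) ∉ A.map ι := by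
    rintro v hv ⟨a, ha, haeq⟩
    exact hv (of_injective (φ := φ.symm) haeq ▸ ha)
  have hmaple : ∀ w : HNNExtension G B A φ.symm, w ∈ A.map ι → w ∈ ι.range := by
    rintro w ⟨a, _, rfl⟩; exact ⟨a, rfl⟩
  have hdir : (|m₂| < |m₁| ∨ |n₂| < |n₁|) ∨ (|m₁| < |m₂| ∨ |n₁| < |n₂|) := by
    rcases habs with h | h
    · rcases h.lt_or_gt with h | h
      · exact Or.inr (Or.inl h)
      · exact Or.inl (Or.inl h)
    · rcases h.lt_or_gt with h | h
      · exact Or.inr (Or.inr h)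
      · exact Or.inl (Or.inr h)
  have hcomp1 : ∀ z y : ℤ, z • p = y • q → z * m₁ = y * m₂ ∧ z * n₁ = y * n₂ := by
    intro z y h
    rw [hpdef, hqdef, Prod.smul_mk, Prod.smul_mk, Prod.mk.injEq] at h
    simpa [smul_eq_mul] using h
  have hcomp2 : ∀ z y : ℤ, z • q = y • p → z * m₂ = y * m₁ ∧ z * n₂ = y * n₁ := by
    intro z y h
    rw [hpdef, hqdef, Prod.smul_mk, Prod.smul_mk, Prod.mk.injEq] at h
    simpa [smul_eq_mul] using h
  set N : ℕ := S.sup Int.natAbs with hN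
  have hxN : ∀ x ∈ S, |x| ≤ (N : ℤ) := by
    intro x hx
    rw [Int.abs_eq_natAbs]
    exact_mod_cast Finset.le_sup (f := Int.natAbs) hx
  rcases hdir with hdec | hdec
  · -- |m₂| < |m₁| or |n₂| < |n₁| : use g = (t⁻¹)^N
    have shrink : ∀ y z : ℤ, y ≠ 0 → z • p = y • q → z ≠ 0 ∧ |z| < |y| := by
      intro y z hy hzy
      obtain ⟨h1, h2⟩ := hcomp1 z y hzy
      have hz0 : z ≠ 0 := by
        rintro rfl
        simp only [zero_mul] at h1 h2
        exact hq (by rw [hqdef, Prod.mk.injEq]; constructor <;>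
          [exact (mul_eq_zero.1 h1.symm).resolve_left hy;
           exact (mul_eq_zero.1 h2.symm).resolve_left hy])
      refine ⟨hz0, ?_⟩
      rcases hdec with hm | hm
      · have e1 : |z| * |m₁| = |y| * |m₂| := by rw [← abs_mul, ← abs_mul, h1]
        have e2 : |y| * |m₂| < |y| * |m₁| := by
          exact mul_lt_mul_of_pos_left hm (abs_pos.2 hy)
        exact lt_of_mul_lt_mul_right (e1 ▸ e2) (abs_nonneg m₁)
      · have e1 : |z| * |n₁| = |y| * |n₂| := by rw [← abs_mul, ← abs_mul, h2]
        have e2 : |y| * |n₂| < |y| * |n₁| := by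
          exact mul_lt_mul_of_pos_left hm (abs_pos.2 hy)
        exact lt_of_mul_lt_mul_right (e1 ▸ e2) (abs_nonneg n₁)
    have key : ∀ M : ℕ, ∀ y : ℤ, y ≠ 0 → |y| ≤ (M : ℤ) →
        (t⁻¹) ^ M * ι (ofAdd (y • p)) * ((t⁻¹) ^ M)⁻¹ ∉ A.map ι := by
      intro M
      induction M with
      | zero =>
        intro y hy hyN
        exact absurd (lt_of_lt_of_le (abs_pos.2 hy) hyN) (by norm_num)
      | succ M ih =>
        intro y hy hyN
        have hrw : (t⁻¹) ^ (M + 1) * ι (ofAdd (y • p)) * ((t⁻¹) ^ (M + 1))⁻¹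
            = (t⁻¹) ^ M * ι (ofAdd (y • q)) * ((t⁻¹) ^ M)⁻¹ := by
          rw [pow_succ, ← step1 y]; group
        rw [hrw]
        by_cases hmem : ofAdd (y • q) ∈ A
        · obtain ⟨z, hz⟩ := hextA _ hmem
          obtain ⟨hz0, hzlt⟩ := shrink y z hy hz
          rw [← hz]
          refine ih z hz0 ?_
          push_cast at hyN ⊢
          linarith
        · rcases Nat.eq_zero_or_pos M with rfl | hM
          · simpa using hnotmem _ hmem
          · obtain ⟨M', rfl⟩ : ∃ M', M = M' + 1 := ⟨M - 1, by omega⟩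
            intro hc
            refine britton_conj φ.symm (-1) M' (ofAdd (y • q))
              (by rwa [toSubgroup_neg_one]) ?_
            have h1 : (t : HNNExtension G B A φ.symm) ^ (((-1 : ℤˣ)) : ℤ) = t⁻¹ := by
              norm_num
            rw [h1]
            exact hmaple _ hc
    exact ⟨(t⁻¹) ^ N, fun x hx => key N x (hS x hx) (hxN x hx)⟩
  · -- |m₁| < |m₂| or |n₁| < |n₂| : use g = t^N
    have shrink : ∀ y z : ℤ, y ≠ 0 → z • q = y • p → z ≠ 0 ∧ |z| < |y| := by
      intro y z hy hzy
      obtain ⟨h1, h2⟩ := hcomp2 z y hzy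
      have hz0 : z ≠ 0 := by
        rintro rfl
        simp only [zero_mul] at h1 h2
        exact hp (by rw [hpdef, Prod.mk.injEq]; constructor <;>
          [exact (mul_eq_zero.1 h1.symm).resolve_left hy;
           exact (mul_eq_zero.1 h2.symm).resolve_left hy])
      refine ⟨hz0, ?_⟩
      rcases hdec with hm | hm
      · have e1 : |z| * |m₂| = |y| * |m₁| := by rw [← abs_mul, ← abs_mul, h1]
        have e2 : |y| * |m₁| < |y| * |m₂| := by
          exact mul_lt_mul_of_pos_left hm (abs_pos.2 hy)
        exact lt_of_mul_lt_mul_right (e1 ▸ e2) (abs_nonneg m₂)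
      · have e1 : |z| * |n₂| = |y| * |n₁| := by rw [← abs_mul, ← abs_mul, h2]
        have e2 : |y| * |n₁| < |y| * |n₂| := by
          exact mul_lt_mul_of_pos_left hm (abs_pos.2 hy)
        exact lt_of_mul_lt_mul_right (e1 ▸ e2) (abs_nonneg n₂)
    have key : ∀ M : ℕ, ∀ y : ℤ, y ≠ 0 → |y| ≤ (M : ℤ) →
        t ^ M * ι (ofAdd (y • p)) * (t ^ M)⁻¹ ∉ A.map ι := by
      intro M
      induction M with
      | zero =>
        intro y hy hyN
        exact absurd (lt_of_lt_of_le (abs_pos.2 hy) hyN) (by norm_num)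
      | succ M ih =>
        intro y hy hyN
        by_cases hmem : ofAdd (y • p) ∈ B
        · obtain ⟨z, hz⟩ := hextB _ hmem
          obtain ⟨hz0, hzlt⟩ := shrink y z hy hz
          have hrw : t ^ (M + 1) * ι (ofAdd (y • p)) * (t ^ (M + 1))⁻¹
              = t ^ M * ι (ofAdd (z • p)) * (t ^ M)⁻¹ := by
            rw [← hz, pow_succ, ← step2 z]; group
          rw [hrw]
          refine ih z hz0 ?_
          push_cast at hyN ⊢
          linarith
        · intro hc
          refine britton_conj φ.symm 1 M (ofAdd (y • p))
            (by rwa [toSubgroup_one]) ?_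
          have h1 : (t : HNNExtension G B A φ.symm) ^ (((1 : ℤˣ)) : ℤ) = t := by
            norm_num
          rw [h1]
          exact hmaple _ hc
    exact ⟨t ^ N, fun x hx => key N x (hS x hx) (hxN x hx)⟩
end

section
/- Let m₁, n₁, m₂, n₂ be integers with (m₁,n₁) ≠ (0,0) and (m₂,n₂) ≠ (0,0). Suppose either (i) m₁, n₁, m₂, n₂ are all nonzero and m₁·n₂ = m₂·n₁, or (ii) m₁ = m₂ = 0, or (iii) n₁ = n₂ = 0. Write ℤ² additively, set p = (m₁,n₁) and q = (m₂,n₂), let A = ℤ·p and B = ℤ·q, let φ : A → B be a group isomorphism with φ(p) = q, and let G* be the HNN extension of ℤ² with respect to (A, B, φ), with canonical embedding ι : ℤ² → G* and stable letter t satisfying t⁻¹·ι(v)·t = ι(φ(v)) for v ∈ A. Then the subgroup ι(ℤ²) is s-normal in G*: for every w ∈ G*, the set {v ∈ ℤ² : w⁻¹·ι(v)·w ∈ ι(ℤ²)} is infinite. -/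
open Multiplicative HNNExtension

private lemma conj_zpow_helper {G : Type*} [Group G] (w x : G) (k : ℤ) :
    w⁻¹ * x ^ k * w = (w⁻¹ * x * w) ^ k := by
  have h := conj_zpow (i := k) (a := w⁻¹) (b := x)
  simpa using h.symm

private lemma ofAdd_pair_zpow (a : ℤ) (w : ℤ × ℤ) :
    (ofAdd w) ^ a = ofAdd (a * w.1, a * w.2) := by
  rw [← ofAdd_zsmul]
  rfl

private lemma pair_ne_zero_iff (w : ℤ × ℤ) : w ≠ 0 ↔ w.1 ≠ 0 ∨ w.2 ≠ 0 := by
  simp [Prod.ext_iff, not_and_or]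
  tauto

/-- common multiple on a line -/
private lemma line_common_multiple (m₁ n₁ : ℤ) (hp : (m₁, n₁) ≠ (0, 0))
    (v u : ℤ × ℤ) (hv : v ≠ 0) (hu : u ≠ 0)
    (hvl : v.1 * n₁ = v.2 * m₁) (hul : u.1 * n₁ = u.2 * m₁) :
    ∃ a b : ℤ, a ≠ 0 ∧ b ≠ 0 ∧ a * v.1 = b * u.1 ∧ a * v.2 = b * u.2 := by
  by_cases hm : m₁ = 0
  · have hn : n₁ ≠ 0 := by
      intro h; exact hp (by rw [hm, h])
    have hv1 : v.1 = 0 := by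
      have := hvl; rw [hm, mul_zero] at this
      exact (mul_eq_zero.1 this).resolve_right hn
    have hu1 : u.1 = 0 := by
      have := hul; rw [hm, mul_zero] at this
      exact (mul_eq_zero.1 this).resolve_right hn
    have hv2 : v.2 ≠ 0 := ((pair_ne_zero_iff v).1 hv).resolve_left (by simp [hv1])
    have hu2 : u.2 ≠ 0 := ((pair_ne_zero_iff u).1 hu).resolve_left (by simp [hu1])
    exact ⟨u.2, v.2, hu2, hv2, by rw [hv1, hu1, mul_zero, mul_zero], mul_comm _ _⟩
  · have hv1 : v.1 ≠ 0 := by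
      intro h
      have : v.2 * m₁ = 0 := by rw [← hvl, h, zero_mul]
      exact (pair_ne_zero_iff v).1 hv |>.elim (fun h' => h' h)
        (fun h' => h' ((mul_eq_zero.1 this).resolve_right hm))
    have hu1 : u.1 ≠ 0 := by
      intro h
      have : u.2 * m₁ = 0 := by rw [← hul, h, zero_mul]
      exact (pair_ne_zero_iff u).1 hu |>.elim (fun h' => h' h)
        (fun h' => h' ((mul_eq_zero.1 this).resolve_right hm))
    refine ⟨u.1, v.1, hu1, hv1, mul_comm _ _, ?_⟩
    have key : (u.1 * v.2) * m₁ = (v.1 * u.2) * m₁ := by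
      linear_combination v.1 * hul - u.1 * hvl
    exact mul_right_cancel₀ hm key

/-- With `p = (m₁,n₁) ≠ 0`, `q = (m₂,n₂) ≠ 0`, assume either all of
`m₁, n₁, m₂, n₂` are nonzero and `m₁·n₂ = m₂·n₁`, or `m₁ = m₂ = 0`, or `n₁ = n₂ = 0`.
Let `A = ℤ·p`, `B = ℤ·q`, `φ : A ≃* B` with `φ p = q`, and `G*` the HNN extension of `ℤ²`
with respect to `(A, B, φ)` (stable letter satisfying `t⁻¹·ι(v)·t = ι(φ v)` for `v ∈ A`,
realized as Mathlib's `HNNExtension _ B A φ.symm`). Then `ι(ℤ²)` is s-normal in `G*`: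
for every `w ∈ G*` the set `{v ∈ ℤ² : w⁻¹·ι(v)·w ∈ ι(ℤ²)}` is infinite. -/
theorem hnn_extension_Z2_base_s_normal
    (m₁ n₁ m₂ n₂ : ℤ) (hp : (m₁, n₁) ≠ (0, 0)) (hq : (m₂, n₂) ≠ (0, 0))
    (hcase : (m₁ ≠ 0 ∧ n₁ ≠ 0 ∧ m₂ ≠ 0 ∧ n₂ ≠ 0 ∧ m₁ * n₂ = m₂ * n₁) ∨
      (m₁ = 0 ∧ m₂ = 0) ∨ (n₁ = 0 ∧ n₂ = 0))
    (A B : Subgroup (Multiplicative (ℤ × ℤ)))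
    (hA : A = Subgroup.zpowers (ofAdd (m₁, n₁)))
    (hB : B = Subgroup.zpowers (ofAdd (m₂, n₂)))
    (φ : A ≃* B)
    (hφ : ∀ a : A, (a : Multiplicative (ℤ × ℤ)) = ofAdd (m₁, n₁) →
      ((φ a : B) : Multiplicative (ℤ × ℤ)) = ofAdd (m₂, n₂)) :
    ∀ w : HNNExtension (Multiplicative (ℤ × ℤ)) B A φ.symm,
      {v : ℤ × ℤ | w⁻¹ * HNNExtension.of (ofAdd v) * w ∈
        (HNNExtension.of :
          Multiplicative (ℤ × ℤ) →* HNNExtension (Multiplicative (ℤ × ℤ)) B A φ.symm).range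
        }.Infinite := by
  -- q is on the line x * n₁ = y * m₁
  have hq_line : m₂ * n₁ = n₂ * m₁ := by
    rcases hcase with ⟨_, _, _, _, h⟩ | ⟨h1, h2⟩ | ⟨h1, h2⟩
    · linarith
    · simp [h1, h2]
    · simp [h1, h2]
  -- the key claim, by induction on the HNN extension
  have key : ∀ w : HNNExtension (Multiplicative (ℤ × ℤ)) B A φ.symm,
      ∃ u v : ℤ × ℤ, u ≠ 0 ∧ v ≠ 0 ∧ u.1 * n₁ = u.2 * m₁ ∧ v.1 * n₁ = v.2 * m₁ ∧
        ∀ k : ℤ, w⁻¹ * (HNNExtension.of (ofAdd u)) ^ k * w =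
          (HNNExtension.of (ofAdd v)) ^ k := by
    intro w
    induction w using HNNExtension.induction_on with
    | of g =>
        refine ⟨(m₁, n₁), (m₁, n₁), hp, hp, mul_comm _ _, mul_comm _ _, fun k => ?_⟩
        rw [← map_zpow, ← map_inv, ← map_mul, ← map_mul]
        congr 1
        rw [mul_comm g⁻¹, mul_assoc, inv_mul_cancel, mul_one]
    | t =>
        have hmem : ofAdd ((m₁ : ℤ), n₁) ∈ A := hA ▸ Subgroup.mem_zpowers _
        refine ⟨(m₁, n₁), (m₂, n₂), hp, hq, mul_comm _ _, hq_line, fun k => ?_⟩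
        have h1 := HNNExtension.equiv_symm_eq_conj (φ := φ.symm) ⟨ofAdd (m₁, n₁), hmem⟩
        rw [MulEquiv.symm_symm] at h1
        rw [hφ ⟨ofAdd (m₁, n₁), hmem⟩ rfl] at h1
        rw [conj_zpow_helper, ← h1]
    | mul x y hx hy =>
        obtain ⟨u₁, v₁, hu₁, hv₁, hu₁l, hv₁l, hk₁⟩ := hx
        obtain ⟨u₂, v₂, hu₂, hv₂, hu₂l, hv₂l, hk₂⟩ := hy
        obtain ⟨a, b, ha, hb, hab1, hab2⟩ :=
          line_common_multiple m₁ n₁ hp v₁ u₂ hv₁ hu₂ hv₁l hu₂l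
        refine ⟨(a * u₁.1, a * u₁.2), (b * v₂.1, b * v₂.2), ?_, ?_, ?_, ?_, fun k => ?_⟩
        · rw [pair_ne_zero_iff]
          rcases (pair_ne_zero_iff u₁).1 hu₁ with h | h
          · exact Or.inl (mul_ne_zero ha h)
          · exact Or.inr (mul_ne_zero ha h)
        · rw [pair_ne_zero_iff]
          rcases (pair_ne_zero_iff v₂).1 hv₂ with h | h
          · exact Or.inl (mul_ne_zero hb h)
          · exact Or.inr (mul_ne_zero hb h)
        · show a * u₁.1 * n₁ = a * u₁.2 * m₁
          linear_combination a * hu₁l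
        · show b * v₂.1 * n₁ = b * v₂.2 * m₁
          linear_combination b * hv₂l
        · have hv12 : (ofAdd v₁ : Multiplicative (ℤ × ℤ)) ^ a = (ofAdd u₂) ^ b := by
            rw [ofAdd_pair_zpow, ofAdd_pair_zpow, hab1, hab2]
          have e1 : HNNExtension.of (φ := φ.symm) (ofAdd ((a * u₁.1 : ℤ), a * u₁.2)) =
              (HNNExtension.of (ofAdd u₁)) ^ a :=
            (DFunLike.congr_arg HNNExtension.of (ofAdd_pair_zpow a u₁).symm).trans
              (map_zpow _ _ _)
          have e2 : ((HNNExtension.of (φ := φ.symm) (ofAdd v₁)) ^ a) =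
              (HNNExtension.of (ofAdd u₂)) ^ b :=
            ((map_zpow HNNExtension.of (ofAdd v₁) a).symm.trans
              (DFunLike.congr_arg HNNExtension.of hv12)).trans
              (map_zpow _ _ _)
          have e3 : ((HNNExtension.of (φ := φ.symm) (ofAdd v₂)) ^ b) =
              HNNExtension.of (ofAdd ((b * v₂.1 : ℤ), b * v₂.2)) :=
            (map_zpow HNNExtension.of (ofAdd v₂) b).symm.trans
              (DFunLike.congr_arg HNNExtension.of (ofAdd_pair_zpow b v₂))
          have h1 : HNNExtension.of (φ := φ.symm) (ofAdd ((a * u₁.1 : ℤ), a * u₁.2)) ^ k =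
              (HNNExtension.of (ofAdd u₁)) ^ (a * k) := by
            rw [e1, ← zpow_mul]
          have h2 : (HNNExtension.of (φ := φ.symm) (ofAdd v₁)) ^ (a * k) =
              (HNNExtension.of (ofAdd u₂)) ^ (b * k) := by
            rw [zpow_mul, e2, ← zpow_mul]
          have h3 : (HNNExtension.of (φ := φ.symm) (ofAdd v₂)) ^ (b * k) =
              (HNNExtension.of (ofAdd ((b * v₂.1 : ℤ), b * v₂.2))) ^ k := by
            rw [zpow_mul, e3]
          calc (x * y)⁻¹ * HNNExtension.of (ofAdd ((a * u₁.1 : ℤ), a * u₁.2)) ^ k * (x * y)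
              = y⁻¹ * (x⁻¹ * (HNNExtension.of (ofAdd u₁)) ^ (a * k) * x) * y := by
                rw [h1]; group
            _ = y⁻¹ * (HNNExtension.of (ofAdd v₁)) ^ (a * k) * y := by rw [hk₁]
            _ = y⁻¹ * (HNNExtension.of (ofAdd u₂)) ^ (b * k) * y := by rw [h2]
            _ = (HNNExtension.of (ofAdd v₂)) ^ (b * k) := hk₂ _
            _ = (HNNExtension.of (ofAdd ((b * v₂.1 : ℤ), b * v₂.2))) ^ k := h3
    | inv x hx =>
        obtain ⟨u, v, hu, hv, hul, hvl, hk⟩ := hx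
        refine ⟨v, u, hv, hu, hvl, hul, fun k => ?_⟩
        rw [inv_inv, ← hk k]
        group
  intro w
  obtain ⟨u, v, hu, hv, hul, hvl, hk⟩ := key w
  apply Set.infinite_of_injective_forall_mem (f := fun k : ℤ => ((k * u.1 : ℤ), (k * u.2 : ℤ)))
  · intro k₁ k₂ h
    rcases (pair_ne_zero_iff u).1 hu with h1 | h1
    · exact mul_right_cancel₀ h1 (congrArg Prod.fst h)
    · exact mul_right_cancel₀ h1 (congrArg Prod.snd h)
  · intro k
    have e : HNNExtension.of (φ := φ.symm) (ofAdd ((k * u.1 : ℤ), k * u.2)) =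
        (HNNExtension.of (ofAdd u)) ^ k :=
      (DFunLike.congr_arg HNNExtension.of (ofAdd_pair_zpow k u).symm).trans (map_zpow _ _ _)
    refine ⟨(ofAdd v) ^ k, ?_⟩
    rw [map_zpow, ← hk k, e]
end

section
/- Let n ≥ 1 and let Aₑ and A_f be n×n integer matrices with nonzero determinant. Let A = Aₑ·ℤⁿ and B = A_f·ℤⁿ be the subgroups of ℤⁿ (written additively) given by their images under matrix-vector multiplication, and let φ : A → B be the group isomorphism with φ(Aₑ·x) = A_f·x for all x ∈ ℤⁿ. Let G* be the HNN extension of ℤⁿ with respect to (A, B, φ), with canonical embedding ι : ℤⁿ → G* and stable letter t satisfying t⁻¹·ι(v)·t = ι(φ(v)) for all v ∈ A. Let M = Aₑ⁻¹·A_f, a matrix over ℚ. Suppose that for every finite set F of nonzero vectors of ℤⁿ there exists an integer m ≥ 1 such that for every x ∈ F the rational vector M^m·x has at least one coordinate that is not an integer. Then for every finite set S of nonzero vectors of ℤⁿ there exists g ∈ G* such that g·ι(Aₑ·x)·g⁻¹ ∉ ι(A) for all x ∈ S. -/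
open Multiplicative HNNExtension

/-- Britton's lemma specialization: `t^{-(r+1)} · w · t^{r+1}` is not in the image of
the base group when `w ∉ toSubgroup A B (-1)`. -/
lemma britton_aux {G : Type*} [Group G] (A B : Subgroup G) (φ : A ≃* B) (w : G)
    (hw : w ∉ toSubgroup A B (-1)) (r : ℕ) :
    (t : HNNExtension G A B φ) ^ (-(r + 1 : ℤ)) * of w * t ^ ((r + 1 : ℤ)) ∉
      (of.range : Subgroup (HNNExtension G A B φ)) := by
  intro hmem
  set R : ℤˣ × G → ℤˣ × G → Prop := fun a b => a.2 ∈ toSubgroup A B a.1 → a.1 = b.1 with hR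
  have chain : List.Chain' R
      (List.replicate r ((-1 : ℤˣ), (1 : G)) ++
        ((-1 : ℤˣ), w) :: List.replicate (r + 1) ((1 : ℤˣ), (1 : G))) := by
    refine List.isChain_append.2 ⟨List.isChain_replicate_of_rel _ (fun _ => rfl), ?_, ?_⟩
    · refine List.isChain_cons.2 ⟨?_, List.isChain_replicate_of_rel _ (fun _ => rfl)⟩
      intro y hy h
      exact absurd h hw
    · intro x hx y hy
      obtain ⟨h, rfl⟩ := List.mem_getLast?_eq_getLast hx
      have hx' : List.getLast _ h = ((-1 : ℤˣ), (1 : G)) :=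
        List.eq_of_mem_replicate (List.getLast_mem h)
      rw [hx']
      simp only [List.head?_cons, Option.mem_def, Option.some.injEq] at hy
      subst hy
      intro _; rfl
  set W : NormalWord.ReducedWord G A B :=
    { head := 1
      toList := List.replicate r ((-1 : ℤˣ), (1 : G)) ++
          ((-1 : ℤˣ), w) :: List.replicate (r + 1) ((1 : ℤˣ), (1 : G))
      chain := chain } with hW
  have hprod : W.prod φ = t ^ (-(r + 1 : ℤ)) * of w * t ^ ((r + 1 : ℤ)) := by
    simp only [hW, NormalWord.ReducedWord.prod, List.map_append, List.map_cons,
      List.map_replicate, List.prod_append, List.prod_cons, List.prod_replicate, map_one,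
      one_mul, mul_one]
    have h3 : (t : HNNExtension G A B φ) ^ (-(r + 1 : ℤ)) = (t⁻¹) ^ r * t⁻¹ := by
      rw [← pow_succ, inv_pow, ← zpow_natCast, ← zpow_neg]
      norm_num
    have h4 : (t : HNNExtension G A B φ) ^ ((r + 1 : ℤ)) = t ^ (r + 1) := by
      rw [← zpow_natCast]; norm_num
    rw [h3, h4]
    simp [mul_assoc, zpow_neg_one]
  have := ReducedWord.toList_eq_nil_of_mem_of_range φ W (by rw [hprod]; exact hmem)
  simp [hW] at this

/-- Let `n ≥ 1` and `Aₑ, A_f` be `n×n` integer matrices with nonzero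
determinant, `A = Aₑ·ℤⁿ`, `B = A_f·ℤⁿ`, `φ : A ≃* B` with `φ (Aₑ·x) = A_f·x`, and let `G*` be
the HNN extension of `ℤⁿ` with respect to `(A, B, φ)` (stable letter satisfying
`t⁻¹·ι(v)·t = ι(φ v)` for `v ∈ A`, realized as Mathlib's `HNNExtension _ B A φ.symm`).
Set `M = Aₑ⁻¹·A_f` over `ℚ`. If for every finite set `F` of nonzero vectors of `ℤⁿ` there is
`m ≥ 1` such that for all `x ∈ F` the vector `M^m·x` has a non-integer coordinate, then for
every finite set `S` of nonzero vectors of `ℤⁿ` there exists `g ∈ G*` with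
`g·ι(Aₑ·x)·g⁻¹ ∉ ι(A)` for all `x ∈ S`. -/
theorem hnn_extension_Zn_conjugate_out_of_edge_subgroup
    (n : ℕ) (hn : 1 ≤ n)
    (Ae Af : Matrix (Fin n) (Fin n) ℤ) (hAe : Ae.det ≠ 0) (hAf : Af.det ≠ 0)
    (A B : Subgroup (Multiplicative (Fin n → ℤ)))
    (hA : ∀ v : Multiplicative (Fin n → ℤ), v ∈ A ↔ ∃ x : Fin n → ℤ, v = ofAdd (Ae.mulVec x))
    (hB : ∀ v : Multiplicative (Fin n → ℤ), v ∈ B ↔ ∃ x : Fin n → ℤ, v = ofAdd (Af.mulVec x))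
    (φ : A ≃* B)
    (hφ : ∀ (a : A) (x : Fin n → ℤ), (a : Multiplicative (Fin n → ℤ)) = ofAdd (Ae.mulVec x) →
      ((φ a : B) : Multiplicative (Fin n → ℤ)) = ofAdd (Af.mulVec x))
    (hM : ∀ F : Finset (Fin n → ℤ), (∀ x ∈ F, x ≠ 0) →
      ∃ m : ℕ, 1 ≤ m ∧ ∀ x ∈ F, ∃ i : Fin n,
        (((Ae.map (Int.cast : ℤ → ℚ))⁻¹ * Af.map (Int.cast : ℤ → ℚ)) ^ m).mulVec
            (fun j => (x j : ℚ)) i ∉ Set.range (Int.cast : ℤ → ℚ))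
    (S : Finset (Fin n → ℤ)) (hS : ∀ x ∈ S, x ≠ 0) :
    ∃ g : HNNExtension (Multiplicative (Fin n → ℤ)) B A φ.symm,
      ∀ x ∈ S, g * HNNExtension.of (ofAdd (Ae.mulVec x)) * g⁻¹ ∉
        A.map (HNNExtension.of : Multiplicative (Fin n → ℤ) →*
          HNNExtension (Multiplicative (Fin n → ℤ)) B A φ.symm) := by
  classical
  obtain ⟨m, hm1, hmS⟩ := hM S hS
  set G := Multiplicative (Fin n → ℤ)
  set H := HNNExtension G B A φ.symm
  set Aq : Matrix (Fin n) (Fin n) ℚ := Ae.map (Int.cast : ℤ → ℚ) with hAq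
  set Fq : Matrix (Fin n) (Fin n) ℚ := Af.map (Int.cast : ℤ → ℚ) with hFq
  set M : Matrix (Fin n) (Fin n) ℚ := Aq⁻¹ * Fq with hMdef
  -- basic rational facts
  have hAqdet : IsUnit Aq.det := by
    have h2 : Aq = (Int.castRingHom ℚ).mapMatrix Ae := by
      rw [hAq]; ext i j; simp
    have hdet : Aq.det = (Ae.det : ℚ) := by
      rw [h2, ← RingHom.map_det]
      simp
    rw [hdet, isUnit_iff_ne_zero]
    exact_mod_cast hAe
  have hAeM : Aq * M = Fq := by
    rw [hMdef, ← mul_assoc, Matrix.mul_nonsing_inv _ hAqdet, one_mul]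
  -- casting vectors
  set cv : (Fin n → ℤ) → (Fin n → ℚ) := fun y j => (y j : ℚ) with hcv
  have hcv_inj : Function.Injective cv := by
    intro a b hab
    funext j
    have h := congrFun hab j
    simp only [hcv] at h
    exact_mod_cast h
  have hcast : ∀ (C : Matrix (Fin n) (Fin n) ℤ) (y : Fin n → ℤ),
      cv (C.mulVec y) = (C.map (Int.cast : ℤ → ℚ)).mulVec (cv y) := by
    intro C y
    funext i
    exact RingHom.map_mulVec (Int.castRingHom ℚ) C y i
  -- membership characterization over ℚ
  have hmemA : ∀ w : Fin n → ℤ, ofAdd w ∈ A ↔ ∀ i, Aq⁻¹.mulVec (cv w) i ∈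
      Set.range (Int.cast : ℤ → ℚ) := by
    intro w
    constructor
    · rintro hw
      obtain ⟨y, hy⟩ := (hA _).1 hw
      have hy' : w = Ae.mulVec y := ofAdd.injective hy
      intro i
      refine ⟨y i, ?_⟩
      have h1 : Aq⁻¹.mulVec (cv (Ae.mulVec y)) = cv y := by
        rw [hcast, ← hAq, Matrix.mulVec_mulVec, Matrix.nonsing_inv_mul _ hAqdet,
          Matrix.one_mulVec]
      rw [hy', h1]
    · intro hw
      choose y hy using hw
      have hyv : cv y = Aq⁻¹.mulVec (cv w) := by
        funext i
        simpa [hcv] using hy i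
      refine (hA _).2 ⟨y, ?_⟩
      congr 1
      refine hcv_inj ?_
      rw [hcast, ← hAq, hyv, Matrix.mulVec_mulVec, Matrix.mul_nonsing_inv _ hAqdet,
        Matrix.one_mulVec]
  refine ⟨(t : H) ^ (-(m : ℤ)), ?_⟩
  intro x hxS hmem
  obtain ⟨i0, hi0⟩ := hmS x hxS
  -- the predicate: `M^j x` is not integral
  set P : ℕ → Prop := fun j => ¬ ∀ i, (M ^ j).mulVec (cv x) i ∈ Set.range (Int.cast : ℤ → ℚ)
    with hP
  have hPm : P m := fun h => hi0 (h i0)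
  set k := Nat.find ⟨m, hPm⟩ with hk
  have hkP : P k := Nat.find_spec ⟨m, hPm⟩
  have hkm : k ≤ m := Nat.find_min' _ hPm
  have hjint : ∀ j < k, ∀ i, (M ^ j).mulVec (cv x) i ∈ Set.range (Int.cast : ℤ → ℚ) := by
    intro j hj
    by_contra h
    exact absurd h (by simpa [hP] using Nat.find_min ⟨m, hPm⟩ hj)
  have hk1 : 1 ≤ k := by
    rcases Nat.eq_zero_or_pos k with h0 | h; swap; · exact h
    exfalso
    apply hkP
    intro i
    rw [h0]
    simp only [pow_zero, Matrix.one_mulVec]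
    exact ⟨x i, rfl⟩
  -- conjugation up to stage j (for j < k)
  have key : ∀ j, j < k → ∃ y : Fin n → ℤ, cv y = (M ^ j).mulVec (cv x) ∧
      (t : H) ^ (-(j : ℤ)) * HNNExtension.of (ofAdd (Ae.mulVec x)) * t ^ (j : ℤ) =
        HNNExtension.of (ofAdd (Ae.mulVec y)) := by
    intro j
    induction j with
    | zero =>
      intro _
      exact ⟨x, by simp [Matrix.one_mulVec], by simp⟩
    | succ j ih =>
      intro hj
      obtain ⟨y, hy1, hy2⟩ := ih (Nat.lt_of_succ_lt hj)
      choose z hz using hjint (j + 1) hj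
      have hzc : cv z = (M ^ (j + 1)).mulVec (cv x) := by
        funext i
        simpa [hcv] using hz i
      refine ⟨z, hzc, ?_⟩
      have hyA : ofAdd (Ae.mulVec y) ∈ A := (hA _).2 ⟨y, rfl⟩
      have hstep : (t : H)⁻¹ * HNNExtension.of (ofAdd (Ae.mulVec y)) * t =
          HNNExtension.of (ofAdd (Af.mulVec y)) := by
        have h := (HNNExtension.equiv_symm_eq_conj (G := G) (A := B) (B := A)
          (φ := φ.symm) ⟨ofAdd (Ae.mulVec y), hyA⟩).symm
        rw [MulEquiv.symm_symm] at h
        rw [h, hφ ⟨ofAdd (Ae.mulVec y), hyA⟩ y rfl]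
      have hAfz : Af.mulVec y = Ae.mulVec z := by
        refine hcv_inj ?_
        rw [hcast, hcast, ← hFq, ← hAq, hzc, hy1, Matrix.mulVec_mulVec, Matrix.mulVec_mulVec,
          ← hAeM, mul_assoc, ← pow_succ']
      have hpow : (t : H) ^ (-((j : ℤ) + 1)) = t⁻¹ * t ^ (-(j : ℤ)) := by
        rw [show -((j : ℤ) + 1) = -1 + -(j : ℤ) by ring, zpow_add, zpow_neg_one]
      calc (t : H) ^ (-((j + 1 : ℕ) : ℤ)) * HNNExtension.of (ofAdd (Ae.mulVec x)) *
            t ^ (((j + 1 : ℕ)) : ℤ)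
          = t⁻¹ * ((t : H) ^ (-(j : ℤ)) * HNNExtension.of (ofAdd (Ae.mulVec x)) *
            t ^ (j : ℤ)) * t := by
            push_cast
            rw [hpow, zpow_add, zpow_one]
            group
        _ = t⁻¹ * HNNExtension.of (ofAdd (Ae.mulVec y)) * t := by rw [hy2]
        _ = HNNExtension.of (ofAdd (Af.mulVec y)) := hstep
        _ = HNNExtension.of (ofAdd (Ae.mulVec z)) := by rw [hAfz]
  -- at stage k - 1, one more conjugation lands outside A
  obtain ⟨y, hy1, hy2⟩ := key (k - 1) (by omega)
  have hyA : ofAdd (Ae.mulVec y) ∈ A := (hA _).2 ⟨y, rfl⟩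
  have hstep : (t : H)⁻¹ * HNNExtension.of (ofAdd (Ae.mulVec y)) * t =
      HNNExtension.of (ofAdd (Af.mulVec y)) := by
    have h := (HNNExtension.equiv_symm_eq_conj (G := G) (A := B) (B := A)
      (φ := φ.symm) ⟨ofAdd (Ae.mulVec y), hyA⟩).symm
    rw [MulEquiv.symm_symm] at h
    rw [h, hφ ⟨ofAdd (Ae.mulVec y), hyA⟩ y rfl]
  have hconjk : (t : H) ^ (-(k : ℤ)) * HNNExtension.of (ofAdd (Ae.mulVec x)) * t ^ (k : ℤ) =
      HNNExtension.of (ofAdd (Af.mulVec y)) := by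
    have hk' : (k : ℤ) = ((k - 1 : ℕ) : ℤ) + 1 := by omega
    rw [hk', neg_add, zpow_add, zpow_add, zpow_one, zpow_neg_one]
    calc t ^ (-((k - 1 : ℕ) : ℤ)) * (t : H)⁻¹ * HNNExtension.of (ofAdd (Ae.mulVec x)) *
          (t ^ ((k - 1 : ℕ) : ℤ) * t)
        = t⁻¹ * ((t : H) ^ (-((k - 1 : ℕ) : ℤ)) * HNNExtension.of (ofAdd (Ae.mulVec x)) *
          t ^ ((k - 1 : ℕ) : ℤ)) * t := by
          have hcomm : (t : H) ^ (-((k - 1 : ℕ) : ℤ)) * t⁻¹ = t⁻¹ * t ^ (-((k - 1 : ℕ) : ℤ)) := by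
            rw [← zpow_neg_one, zpow_mul_comm]
          rw [← mul_assoc, ← mul_assoc, hcomm]
          group
      _ = t⁻¹ * HNNExtension.of (ofAdd (Ae.mulVec y)) * t := by rw [hy2]
      _ = HNNExtension.of (ofAdd (Af.mulVec y)) := hstep
  -- `Af y ∉ A`
  have hk'' : k - 1 + 1 = k := by omega
  have hwA : ofAdd (Af.mulVec y) ∉ A := by
    intro hcontra
    apply hkP
    have hvec : Aq⁻¹.mulVec (cv (Af.mulVec y)) = (M ^ k).mulVec (cv x) := by
      rw [hcast, ← hFq, hy1, Matrix.mulVec_mulVec, Matrix.mulVec_mulVec, ← hMdef,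
        ← pow_succ', hk'']
    intro i
    rw [← hvec]
    exact (hmemA (Af.mulVec y)).1 hcontra i
  -- assemble: the conjugate equals `t^{-(m-k)} · w · t^{m-k}`
  set r := m - k with hr
  have hmrk : (m : ℤ) = (r : ℤ) + (k : ℤ) := by omega
  have hsplit : (t : H) ^ (-(m : ℤ)) * HNNExtension.of (ofAdd (Ae.mulVec x)) * t ^ (m : ℤ) =
      t ^ (-(r : ℤ)) * HNNExtension.of (ofAdd (Af.mulVec y)) * t ^ (r : ℤ) := by
    rw [hmrk, neg_add, zpow_add, zpow_add, ← hconjk]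
    have hcomm : (t : H) ^ (-(r : ℤ)) * t ^ (-(k : ℤ)) = t ^ (-(k : ℤ)) * t ^ (-(r : ℤ)) :=
      zpow_mul_comm _ _ _
    group
  have hg : ((t : H) ^ (-(m : ℤ)))⁻¹ = t ^ (m : ℤ) := by
    rw [zpow_neg, inv_inv]
  rw [hg, hsplit] at hmem
  -- conclude via Britton's lemma / injectivity
  rcases Nat.eq_zero_or_pos r with hr0 | hrpos
  · rw [hr0] at hmem
    simp only [Nat.cast_zero, neg_zero, zpow_zero, one_mul, mul_one] at hmem
    obtain ⟨a, haA, ha⟩ := hmem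
    have heq : a = ofAdd (Af.mulVec y) :=
      HNNExtension.of_injective (G := G) (A := B) (B := A) (φ := φ.symm) ha
    exact hwA (heq ▸ haA)
  · obtain ⟨r', hr'⟩ : ∃ r', r = r' + 1 := ⟨r - 1, by omega⟩
    have hwB : (ofAdd (Af.mulVec y) : G) ∉ toSubgroup B A (-1) := by
      simpa using hwA
    refine britton_aux B A φ.symm (ofAdd (Af.mulVec y)) hwB r' ?_
    rw [hr'] at hmem
    push_cast at hmem ⊢
    obtain ⟨a, _, ha⟩ := hmem
    exact ⟨a, ha⟩
end

section
/- Let θ be a real number such that θ/π is irrational. Then for every finite set F of pairs of integers (y, z) with (y, z) ≠ (0, 0), there exists an integer m ≥ 1 such that for every (y, z) ∈ F it is not the case that both y·cos(mθ) + z·sin(mθ) and −y·sin(mθ) + z·cos(mθ) are integers; equivalently, the vector R^m·(y, z) does not lie in ℤ², where R is the rotation matrix with rows (cos θ, sin θ) and (−sin θ, cos θ). -/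
private lemma rot_exp_inj_of_irr (θ : ℝ) (hθ : Irrational (θ / Real.pi)) :
    Function.Injective (fun m : ℕ => Complex.exp (-((m : ℂ) * θ) * Complex.I)) := by
  intro m1 m2 h
  by_contra hne
  simp only at h
  rw [Complex.exp_eq_exp_iff_exists_int] at h
  obtain ⟨n, hn⟩ := h
  have him := congrArg Complex.im hn
  push_cast at him
  simp [Complex.mul_im, Complex.add_im] at him
  have hm : ((m2 : ℝ)) - (m1 : ℝ) ≠ 0 := by
    intro h0
    have : (m2:ℝ) = m1 := sub_eq_zero.mp h0
    exact hne (by exact_mod_cast this.symm)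
  have hq : θ / Real.pi = ((2 * n / ((m2 : ℤ) - (m1 : ℤ)) : ℚ) : ℝ) := by
    push_cast
    field_simp
    linarith
  exact hθ ⟨_, hq.symm⟩

private lemma rot_circle_finite (N : ℤ) : {q : ℤ × ℤ | q.1 ^ 2 + q.2 ^ 2 = N}.Finite := by
  apply Set.Finite.subset (Set.finite_Icc ((-N, -N) : ℤ × ℤ) (N, N))
  rintro ⟨a, b⟩ h
  simp only [Set.mem_setOf_eq] at h
  constructor <;> constructor <;> simp <;>
    nlinarith [sq_nonneg (2*a+1), sq_nonneg (2*b+1), sq_nonneg (2*a-1), sq_nonneg (2*b-1),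
      sq_nonneg a, sq_nonneg b]

private lemma rot_exp_neg_mul_I (x : ℝ) :
    Complex.exp (-(x : ℂ) * Complex.I) = (Real.cos x : ℂ) - (Real.sin x : ℂ) * Complex.I := by
  rw [show -(x : ℂ) = ((-x : ℝ) : ℂ) by push_cast; ring, Complex.exp_mul_I]
  rw [← Complex.ofReal_cos, ← Complex.ofReal_sin]
  push_cast [Real.cos_neg, Real.sin_neg]
  ring

/-- Let `θ` be a real number with `θ/π` irrational. Then for every finite
set `F` of pairs of integers `(y, z) ≠ (0, 0)` there exists `m ≥ 1` such that for every
`(y, z) ∈ F` it is not the case that both `y·cos(mθ) + z·sin(mθ)` and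
`−y·sin(mθ) + z·cos(mθ)` are integers. -/
theorem rotation_escapes_integer_lattice
    (θ : ℝ) (hθ : Irrational (θ / Real.pi))
    (F : Finset (ℤ × ℤ)) (hF : ∀ p ∈ F, p ≠ (0, 0)) :
    ∃ m : ℕ, 1 ≤ m ∧ ∀ p ∈ F,
      ¬ (((p.1 : ℝ) * Real.cos (m * θ) + (p.2 : ℝ) * Real.sin (m * θ) ∈
            Set.range (Int.cast : ℤ → ℝ)) ∧
        (-(p.1 : ℝ) * Real.sin (m * θ) + (p.2 : ℝ) * Real.cos (m * θ) ∈
            Set.range (Int.cast : ℤ → ℝ))) := by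
  classical
  set Bad : ℤ × ℤ → Set ℕ := fun p => {m : ℕ |
      (((p.1 : ℝ) * Real.cos (m * θ) + (p.2 : ℝ) * Real.sin (m * θ) ∈
            Set.range (Int.cast : ℤ → ℝ)) ∧
        (-(p.1 : ℝ) * Real.sin (m * θ) + (p.2 : ℝ) * Real.cos (m * θ) ∈
            Set.range (Int.cast : ℤ → ℝ)))} with hBad
  have hfin : ∀ p ∈ F, (Bad p).Finite := by
    intro p hp
    have hp0 : ((p.1 : ℂ) + (p.2 : ℂ) * Complex.I) ≠ 0 := by
      intro h0
      apply hF p hp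
      have hre := congrArg Complex.re h0
      have him := congrArg Complex.im h0
      simp at hre him
      exact Prod.ext (by exact_mod_cast hre) (by exact_mod_cast him)
    apply Set.Finite.of_finite_image (f := fun m : ℕ =>
      ((p.1 : ℂ) + (p.2 : ℂ) * Complex.I) * Complex.exp (-((m : ℂ) * θ) * Complex.I))
    · apply Set.Finite.subset (((rot_circle_finite (p.1 ^ 2 + p.2 ^ 2)).image
        (fun q : ℤ × ℤ => (q.1 : ℂ) + (q.2 : ℂ) * Complex.I)))
      rintro w ⟨m, hm, rfl⟩
      obtain ⟨⟨a, ha⟩, ⟨b, hb⟩⟩ := hm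
      refine ⟨(a, b), ?_, ?_⟩
      · have : (a : ℝ) ^ 2 + (b : ℝ) ^ 2 = (p.1 : ℝ) ^ 2 + (p.2 : ℝ) ^ 2 := by
          rw [ha, hb]
          nlinarith [Real.sin_sq_add_cos_sq ((m : ℝ) * θ)]
        exact_mod_cast this
      · have hexp : -((m : ℂ) * θ) * Complex.I = -(((m * θ : ℝ) : ℂ)) * Complex.I := by
          push_cast; ring
        simp only [hexp, rot_exp_neg_mul_I]
        have ha' : ((a : ℂ)) = (((p.1 : ℝ) * Real.cos (m * θ) + (p.2 : ℝ) * Real.sin (m * θ) : ℝ) : ℂ) := by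
          exact_mod_cast congrArg Complex.ofReal ha
        have hb' : ((b : ℂ)) = (((-(p.1 : ℝ)) * Real.sin (m * θ) + (p.2 : ℝ) * Real.cos (m * θ) : ℝ) : ℂ) := by
          exact_mod_cast congrArg Complex.ofReal hb
        rw [ha', hb']
        push_cast
        ring_nf
        rw [Complex.I_sq]
        ring
    · intro m1 _ m2 _ h
      simp only at h
      exact rot_exp_inj_of_irr θ hθ (mul_left_cancel₀ hp0 h)
  have hBfin : (⋃ p ∈ F, Bad p).Finite := Set.Finite.biUnion F.finite_toSet hfin
  have : ((⋃ p ∈ F, Bad p) ∪ {0}).Finite := hBfin.union (Set.finite_singleton 0)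
  obtain ⟨m, hm⟩ := this.infinite_compl.nonempty
  simp only [Set.mem_compl_iff, Set.mem_union, Set.mem_singleton_iff, not_or] at hm
  refine ⟨m, Nat.one_le_iff_ne_zero.mpr hm.2, ?_⟩
  intro p hp hcond
  exact hm.1 (Set.mem_biUnion hp hcond)
end

section
/- Let M be the 2×2 rational matrix with rows (3/5, −4/5) and (4/5, 3/5). Then for every finite set F of nonzero vectors of ℤ² there exists an integer m ≥ 1 such that for every x ∈ F, the rational vector M^m·x has at least one coordinate that is not an integer. -/
open Zsqrtd GaussianInt

private def Alm : Matrix (Fin 2) (Fin 2) ℤ := !![3,-4;4,3]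

set_option synthInstance.maxHeartbeats 1000000 in
private lemma pi_prime : Prime (⟨2,-1⟩ : GaussianInt) := by
  rw [← irreducible_iff_prime]
  constructor
  · intro hu
    have := Zsqrtd.norm_eq_one_iff.mpr hu
    simp [Zsqrtd.norm_def] at this
  · intro a b hab
    have hnorm : a.norm.natAbs * b.norm.natAbs = 5 := by
      rw [← Int.natAbs_mul, ← Zsqrtd.norm_mul, ← hab]
      simp [Zsqrtd.norm_def]
    rcases (Nat.Prime.eq_one_or_self_of_dvd (by norm_num) _ ⟨_, hnorm.symm⟩ :
        a.norm.natAbs = 1 ∨ a.norm.natAbs = 5) with h | h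
    · exact Or.inl (Zsqrtd.norm_eq_one_iff.mp h)
    · right
      apply Zsqrtd.norm_eq_one_iff.mp
      rw [h] at hnorm; omega

private lemma pow_entries (m : ℕ) :
    Alm ^ m = !![((⟨3,4⟩ : GaussianInt)^m).re, -((⟨3,4⟩ : GaussianInt)^m).im;
      ((⟨3,4⟩ : GaussianInt)^m).im, ((⟨3,4⟩ : GaussianInt)^m).re] := by
  induction m with
  | zero =>
    ext i j; fin_cases i <;> fin_cases j <;> simp [Matrix.one_apply]
  | succ m ih =>
    rw [pow_succ, ih, Alm, Matrix.mul_fin_two, pow_succ]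
    ext i j
    fin_cases i <;> fin_cases j <;> simp [Zsqrtd.re_mul, Zsqrtd.im_mul] <;> ring

private lemma norm_pow_pi (m : ℕ) : ((⟨2,-1⟩ : GaussianInt)^m).norm = 5^m := by
  induction m with
  | zero => simp
  | succ m ih => rw [pow_succ, Zsqrtd.norm_mul, ih, pow_succ]; norm_num [Zsqrtd.norm_def]

private lemma key_dvd (m : ℕ) (x : Fin 2 → ℤ)
    (h0 : (5:ℤ)^m ∣ (Alm ^ m).mulVec x 0) (h1 : (5:ℤ)^m ∣ (Alm ^ m).mulVec x 1) :
    (5:ℤ)^m ∣ x 0 ^ 2 + x 1 ^ 2 := by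
  set z : GaussianInt := ⟨x 0, x 1⟩ with hz
  set p : GaussianInt := (⟨3,4⟩ : GaussianInt)^m with hp
  have h0' : (Alm ^ m).mulVec x 0 = (p * z).re := by
    rw [pow_entries]
    simp [Matrix.mulVec, dotProduct, Fin.sum_univ_two, Zsqrtd.re_mul, hz, hp]
  have h1' : (Alm ^ m).mulVec x 1 = (p * z).im := by
    rw [pow_entries]
    simp [Matrix.mulVec, dotProduct, Fin.sum_univ_two, Zsqrtd.im_mul, hz]
    ring
  have hdvd : ((5^m : ℤ) : GaussianInt) ∣ p * z := by
    rw [Zsqrtd.intCast_dvd]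
    exact ⟨h0' ▸ h0, h1' ▸ h1⟩
  have h5 : (5 : GaussianInt) = ⟨2,-1⟩ * ⟨2,1⟩ := by
    ext <;> simp [Zsqrtd.re_mul, Zsqrtd.im_mul]
  have hpi5 : (⟨2,-1⟩ : GaussianInt)^m ∣ ((5^m : ℤ) : GaussianInt) := by
    push_cast
    rw [h5, mul_pow]
    exact dvd_mul_right _ _
  have hdvd2 : (⟨2,-1⟩ : GaussianInt)^m ∣ (⟨2,1⟩ : GaussianInt)^(2*m) * z := by
    refine dvd_trans hpi5 ?_
    have h34 : (⟨3,4⟩ : GaussianInt) = ⟨2,1⟩ * ⟨2,1⟩ := by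
      ext <;> simp [Zsqrtd.re_mul, Zsqrtd.im_mul]
    have : p = (⟨2,1⟩ : GaussianInt)^(2*m) := by rw [hp, h34, ← sq, ← pow_mul, mul_comm]
    rwa [← this]
  have hns : ¬ (⟨2,-1⟩ : GaussianInt) ∣ (⟨2,1⟩ : GaussianInt)^(2*m) := by
    intro h
    have hd := pi_prime.dvd_of_dvd_pow h
    have h02 : (⟨2,-1⟩ : GaussianInt) ∣ (⟨0,2⟩ : GaussianInt) := by
      have hsub := dvd_sub hd (dvd_refl (⟨2,-1⟩ : GaussianInt))
      have : (⟨2,1⟩ : GaussianInt) - ⟨2,-1⟩ = ⟨0,2⟩ := by ext <;> simp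
      rwa [this] at hsub
    obtain ⟨c, hc⟩ := h02
    have hn := congrArg Zsqrtd.norm hc
    rw [Zsqrtd.norm_mul] at hn
    simp [Zsqrtd.norm_def] at hn
    exact absurd ⟨_, hn⟩ (by norm_num : ¬ (5:ℤ) ∣ 4)
  have hfin : (⟨2,-1⟩ : GaussianInt)^m ∣ z :=
    pi_prime.pow_dvd_of_dvd_mul_left m hns hdvd2
  obtain ⟨c, hc⟩ := hfin
  refine ⟨c.norm, ?_⟩
  have hn := congrArg Zsqrtd.norm hc
  rw [Zsqrtd.norm_mul, norm_pow_pi] at hn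
  rw [show x 0 ^ 2 + x 1 ^ 2 = z.norm by simp [hz, Zsqrtd.norm_def]; ring]
  exact hn

private lemma coord_eq (m : ℕ) (x : Fin 2 → ℤ) (i : Fin 2) :
    ((!![(3 : ℚ)/5, -4/5; 4/5, 3/5]) ^ m).mulVec (fun j => (x j : ℚ)) i
      = ((Alm ^ m).mulVec x i : ℚ) / 5^m := by
  have hM : (!![(3 : ℚ)/5, -4/5; 4/5, 3/5]) = (5:ℚ)⁻¹ • (Alm.map (Int.cast : ℤ → ℚ)) := by
    ext i j
    fin_cases i <;> fin_cases j <;> simp [Alm] <;> norm_num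
  have hmap : (Alm.map (Int.cast : ℤ → ℚ))^m = (Alm^m).map (Int.cast : ℤ → ℚ) := by
    simpa using (map_pow ((Int.castRingHom ℚ).mapMatrix) Alm m).symm
  rw [hM, smul_pow, Matrix.smul_mulVec, hmap]
  have : ((Alm^m).map (Int.cast : ℤ → ℚ)).mulVec (fun j => (x j : ℚ)) i
      = ((Alm ^ m).mulVec x i : ℚ) := by
    simp [Matrix.mulVec, dotProduct, Fin.sum_univ_two, Matrix.map_apply]
  rw [Pi.smul_apply, this, smul_eq_mul, inv_pow]
  field_simp

/-- Let `M` be the 2×2 rational matrix with rows `(3/5, −4/5)` and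
`(4/5, 3/5)` (the rotation matrix of the Leary–Minasyan group). Then for every finite set
`F` of nonzero vectors of `ℤ²` there exists `m ≥ 1` such that for every `x ∈ F` the
rational vector `M^m·x` has at least one coordinate that is not an integer. -/
theorem learyMinasyan_matrix_escapes_integer_lattice
    (F : Finset (Fin 2 → ℤ)) (hF : ∀ x ∈ F, x ≠ 0) :
    ∃ m : ℕ, 1 ≤ m ∧ ∀ x ∈ F, ∃ i : Fin 2,
      ((!![(3 : ℚ)/5, -4/5; 4/5, 3/5]) ^ m).mulVec (fun j => (x j : ℚ)) i ∉
        Set.range (Int.cast : ℤ → ℚ) := by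
  set m := max 1 (F.sup fun x => (x 0^2 + x 1^2).toNat) with hm
  refine ⟨m, le_max_left _ _, ?_⟩
  intro x hx
  by_contra h
  push_neg at h
  have hint : ∀ i, (5:ℤ)^m ∣ (Alm^m).mulVec x i := by
    intro i
    obtain ⟨k, hk⟩ := h i
    refine ⟨k, ?_⟩
    rw [coord_eq] at hk
    have h5 : (5:ℚ)^m ≠ 0 := by positivity
    have : ((Alm^m).mulVec x i : ℚ) = (5^m : ℚ) * k := by
      field_simp at hk
      linarith
    exact_mod_cast this
  have hdvd := key_dvd m x (hint 0) (hint 1)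
  have hpos : 0 < x 0^2 + x 1^2 := by
    rcases Fin.exists_fin_two.mp (Function.ne_iff.mp (hF x hx)) with hj | hj
    · have h0 : x 0 ≠ 0 := by simpa using hj
      positivity
    · have h1 : x 1 ≠ 0 := by simpa using hj
      positivity
  have hle : x 0^2 + x 1^2 ≤ (m:ℤ) := by
    have h1 := Finset.le_sup (f := fun x : Fin 2 → ℤ => (x 0^2 + x 1^2).toNat) hx
    have h2 : (x 0^2 + x 1^2).toNat ≤ m := le_trans h1 (le_max_right _ _)
    calc x 0^2 + x 1^2 = ((x 0^2 + x 1^2).toNat : ℤ) :=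
          (Int.toNat_of_nonneg (by positivity)).symm
      _ ≤ (m : ℤ) := by exact_mod_cast h2
  have hlt : (m:ℤ) < 5^m := by exact_mod_cast (Nat.lt_pow_self (by norm_num : 1 < 5) : m < 5 ^ m)
  have h5N : (5:ℤ)^m ≤ x 0^2 + x 1^2 := Int.le_of_dvd hpos hdvd
  linarith
end

section
/- Let Aₑ and A_f be 2×2 integer matrices with nonzero determinant such that the rational matrix M = Aₑ⁻¹·A_f satisfies M₀₀ = M₁₁, M₁₀ = −M₀₁, M₀₀² + M₀₁² = 1, and M^m ≠ 1 for every integer m ≥ 1 (that is, M is a rational rotation matrix of infinite order). Let A = Aₑ·ℤ² and B = A_f·ℤ² be the subgroups of ℤ² given by their images, let φ : A → B be the group isomorphism with φ(Aₑ·x) = A_f·x for all x ∈ ℤ², and let G* be the HNN extension of ℤ² with respect to (A, B, φ), with canonical embedding ι and stable letter t satisfying t⁻¹·ι(v)·t = ι(φ(v)) for v ∈ A. Then for every finite set S of nonzero vectors of ℤ² there exists g ∈ G* such that g·ι(Aₑ·x)·g⁻¹ ∉ ι(A) for all x ∈ S. -/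
open Multiplicative HNNExtension

open HNNExtension.NormalWord

/-- Britton's lemma specialization: `t^{-(m+1)} b t^{m+1}` with `b ∉ B` is not in the base. -/
lemma aux_britton {G : Type*} [Group G] {A B : Subgroup G} {φ : A ≃* B}
    (b : G) (hb : b ∉ B) (m : ℕ) :
    t ^ (-(m + 1 : ℤ)) * of b * t ^ ((m : ℤ) + 1) ∉
      ((of : G →* HNNExtension G A B φ).range :
        Subgroup (HNNExtension G A B φ)) := by
  intro hmem
  have hchain : (List.replicate m ((-1 : ℤˣ), (1 : G)) ++ ((-1 : ℤˣ), b) ::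
      List.replicate (m + 1) ((1 : ℤˣ), (1 : G))).Chain'
      (fun a b' => a.2 ∈ toSubgroup A B a.1 → a.1 = b'.1) := by
    apply List.IsChain.append
    · exact List.isChain_replicate_of_rel _ (fun _ => rfl)
    · refine List.isChain_cons.2 ⟨?_, List.isChain_replicate_of_rel _ (fun _ => rfl)⟩
      intro y hy h
      exact absurd h hb
    · intro p hp q hq
      have hp' : p = ((-1 : ℤˣ), (1 : G)) :=
        List.eq_of_mem_replicate (List.mem_of_mem_getLast? hp)
      have hq' : q = ((-1 : ℤˣ), b) := by simpa using hq.symm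
      subst hp'; subst hq'
      exact fun _ => rfl
  set w : ReducedWord G A B :=
    { head := 1
      toList := List.replicate m ((-1 : ℤˣ), (1 : G)) ++ ((-1 : ℤˣ), b) ::
        List.replicate (m + 1) ((1 : ℤˣ), (1 : G))
      chain := hchain } with hw
  have hprod : w.prod φ = t ^ (-(m + 1 : ℤ)) * of b * t ^ ((m : ℤ) + 1) := by
    simp only [hw, ReducedWord.prod, List.map_append, List.map_cons, List.map_replicate,
      List.prod_append, List.prod_cons, List.prod_replicate, map_one, mul_one, one_mul,
      zpow_neg, zpow_one, zpow_natCast, Units.val_neg, Units.val_one]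
    group
  have := ReducedWord.toList_eq_nil_of_mem_of_range φ w (by rw [hprod]; exact hmem)
  simp [hw] at this

lemma aux_rot_pow (M : Matrix (Fin 2) (Fin 2) ℚ)
    (h11 : M 0 0 = M 1 1) (h10 : M 1 0 = -M 0 1)
    (hrot : M 0 0 ^ 2 + M 0 1 ^ 2 = 1) (n : ℕ) :
    (M ^ n) 0 0 = (M ^ n) 1 1 ∧ (M ^ n) 1 0 = -((M ^ n) 0 1) ∧
      (M ^ n) 0 0 ^ 2 + (M ^ n) 0 1 ^ 2 = 1 := by
  induction n with
  | zero => norm_num [Matrix.one_apply]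
  | succ n ih =>
    obtain ⟨h1, h2, h3⟩ := ih
    have e : ∀ i j, (M ^ (n + 1)) i j = (M ^ n) i 0 * M 0 j + (M ^ n) i 1 * M 1 j := by
      intro i j; rw [pow_succ, Matrix.mul_apply, Fin.sum_univ_two]
    simp only [h11] at hrot
    simp only [h1] at h3
    refine ⟨?_, ?_, ?_⟩ <;> simp only [e, h1, h2, h10, h11]
    · ring
    · ring
    · linear_combination (M 1 1 ^ 2 + M 0 1 ^ 2) * h3 + hrot

lemma aux_rot_norm (R : Matrix (Fin 2) (Fin 2) ℚ)
    (h11 : R 0 0 = R 1 1) (h10 : R 1 0 = -R 0 1)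
    (hrot : R 0 0 ^ 2 + R 0 1 ^ 2 = 1) (v : Fin 2 → ℚ) :
    (R.mulVec v 0) ^ 2 + (R.mulVec v 1) ^ 2 = (v 0) ^ 2 + (v 1) ^ 2 := by
  have e : ∀ i, R.mulVec v i = R i 0 * v 0 + R i 1 * v 1 := by
    intro i; simp [Matrix.mulVec, dotProduct, Fin.sum_univ_two]
  simp only [h11] at hrot
  simp only [e, h10, h11]
  linear_combination (v 0 ^ 2 + v 1 ^ 2) * hrot

lemma aux_rot_cancel (R : Matrix (Fin 2) (Fin 2) ℚ)
    (h11 : R 0 0 = R 1 1) (h10 : R 1 0 = -R 0 1)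
    (hrot : R 0 0 ^ 2 + R 0 1 ^ 2 = 1) {u w : Fin 2 → ℚ}
    (h : R.mulVec u = R.mulVec w) : u = w := by
  have hd : R.mulVec (u - w) = 0 := by rw [Matrix.mulVec_sub, h, sub_self]
  have hq := aux_rot_norm R h11 h10 hrot (u - w)
  rw [hd] at hq
  simp only [Pi.zero_apply, Pi.sub_apply] at hq
  norm_num at hq
  have h0 : u 0 - w 0 = 0 := by nlinarith [sq_nonneg (u 0 - w 0), sq_nonneg (u 1 - w 1)]
  have h1 : u 1 - w 1 = 0 := by nlinarith [sq_nonneg (u 0 - w 0), sq_nonneg (u 1 - w 1)]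
  funext i
  fin_cases i
  · show u 0 = w 0; linarith
  · show u 1 = w 1; linarith

lemma aux_orbit_inj (M : Matrix (Fin 2) (Fin 2) ℚ)
    (h11 : M 0 0 = M 1 1) (h10 : M 1 0 = -M 0 1)
    (hrot : M 0 0 ^ 2 + M 0 1 ^ 2 = 1)
    (hMord : ∀ m : ℕ, 1 ≤ m → M ^ m ≠ 1)
    {x : Fin 2 → ℚ} (hx : x ≠ 0) {n m : ℕ}
    (h : (M ^ n).mulVec x = (M ^ m).mulVec x) : n = m := by
  have key : ∀ n m : ℕ, n < m → (M ^ n).mulVec x = (M ^ m).mulVec x → False := by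
    intro n m hlt h
    have hd : M ^ m = M ^ n * M ^ (m - n) := by
      rw [← pow_add]; congr 1; omega
    rw [hd, ← Matrix.mulVec_mulVec] at h
    obtain ⟨p1, p2, p3⟩ := aux_rot_pow M h11 h10 hrot n
    have hfix : (M ^ (m - n)).mulVec x = x :=
      (aux_rot_cancel (M ^ n) p1 p2 p3 h.symm)
    obtain ⟨q1, q2, q3⟩ := aux_rot_pow M h11 h10 hrot (m - n)
    set R := M ^ (m - n) with hR
    have hRne : R ≠ 1 := hMord (m - n) (by omega)
    -- R 0 0 ≠ 1
    have hc : R 0 0 ≠ 1 := by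
      intro hc1
      apply hRne
      have hs : R 0 1 = 0 := by nlinarith [sq_nonneg (R 0 1)]
      ext i j
      fin_cases i <;> fin_cases j <;>
        simp [Matrix.one_apply, hs, hc1, ← h11, q2, ← q1] <;>
        simp [hc1, hs] at * <;> try linarith
    have e0 : R 0 0 * x 0 + R 0 1 * x 1 = x 0 := by
      have := congrFun hfix 0
      simpa [Matrix.mulVec, dotProduct, Fin.sum_univ_two] using this
    have e1 : R 1 0 * x 0 + R 1 1 * x 1 = x 1 := by
      have := congrFun hfix 1
      simpa [Matrix.mulVec, dotProduct, Fin.sum_univ_two] using this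
    rw [q2, ← q1] at e1
    have k0 : (2 - 2 * R 0 0) * x 0 = 0 := by linear_combination (R 0 0 - 1) * e0 - R 0 1 * e1 - x 0 * q3
    have k1 : (2 - 2 * R 0 0) * x 1 = 0 := by linear_combination (R 0 1) * e0 + (R 0 0 - 1) * e1 - x 1 * q3
    have h2c : (2 - 2 * R 0 0) ≠ 0 := by intro hh; apply hc; linarith
    have hx0 : x 0 = 0 := by rcases mul_eq_zero.1 k0 with h' | h'; exact absurd h' h2c; exact h'
    have hx1 : x 1 = 0 := by rcases mul_eq_zero.1 k1 with h' | h'; exact absurd h' h2c; exact h'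
    apply hx
    funext i
    fin_cases i
    · exact hx0
    · exact hx1
  rcases lt_trichotomy n m with hlt | heq | hgt
  · exact absurd (key n m hlt h) (by simp)
  · exact heq
  · exact absurd (key m n hgt h.symm) (by simp)

lemma aux_bound (M : Matrix (Fin 2) (Fin 2) ℚ)
    (h11 : M 0 0 = M 1 1) (h10 : M 1 0 = -M 0 1)
    (hrot : M 0 0 ^ 2 + M 0 1 ^ 2 = 1)
    (hMord : ∀ m : ℕ, 1 ≤ m → M ^ m ≠ 1)
    (x : Fin 2 → ℤ) (hx : x ≠ 0) :
    ∃ N : ℕ, ∀ n : ℕ, N ≤ n →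
      ¬∃ y : Fin 2 → ℤ, (M ^ n).mulVec (fun i => (x i : ℚ)) = fun i => (y i : ℚ) := by
  set xq : Fin 2 → ℚ := fun i => (x i : ℚ) with hxq
  have hxq0 : xq ≠ 0 := by
    intro h0
    apply hx
    funext i
    have := congrFun h0 i
    simpa [hxq] using this
  set T : Set ℕ := {n : ℕ | ∃ y : Fin 2 → ℤ, (M ^ n).mulVec xq = fun i => (y i : ℚ)} with hT
  have hTfin : T.Finite := by
    set r : ℤ := x 0 ^ 2 + x 1 ^ 2 with hr
    have hzsq : ∀ z : ℤ, z ≤ z ^ 2 := by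
      intro z
      rcases le_or_gt z 0 with h | h
      · nlinarith
      · nlinarith
    have hFfin : {y : Fin 2 → ℤ | y 0 ^ 2 + y 1 ^ 2 = r}.Finite := by
      apply Set.Finite.subset (Finset.Icc (fun _ : Fin 2 => -r) (fun _ : Fin 2 => r)).finite_toSet
      intro y hy
      simp only [Set.mem_setOf_eq] at hy
      simp only [Finset.coe_Icc, Set.mem_Icc, Pi.le_def]
      have hb : ∀ i : Fin 2, -r ≤ y i ∧ y i ≤ r := by
        intro i
        fin_cases i
        · show -r ≤ y 0 ∧ y 0 ≤ r
          constructor <;>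
            nlinarith [hzsq (y 0), hzsq (-y 0), sq_nonneg (y 0), sq_nonneg (y 1)]
        · show -r ≤ y 1 ∧ y 1 ≤ r
          constructor <;>
            nlinarith [hzsq (y 1), hzsq (-y 1), sq_nonneg (y 0), sq_nonneg (y 1)]
      exact ⟨fun i => (hb i).1, fun i => (hb i).2⟩
    classical
    set f : ℕ → (Fin 2 → ℤ) := fun n =>
      if h : ∃ y : Fin 2 → ℤ, (M ^ n).mulVec xq = fun i => (y i : ℚ) then h.choose else 0 with hf
    apply Set.Finite.of_finite_image (f := f) ?_ ?_
    · apply Set.Finite.subset hFfin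
      rintro _ ⟨n, hn, rfl⟩
      have hn' : ∃ y : Fin 2 → ℤ, (M ^ n).mulVec xq = fun i => (y i : ℚ) := hn
      have hspec := hn'.choose_spec
      have hfn : f n = hn'.choose := by rw [hf]; exact dif_pos hn'
      obtain ⟨p1, p2, p3⟩ := aux_rot_pow M h11 h10 hrot n
      have hnorm := aux_rot_norm (M ^ n) p1 p2 p3 xq
      rw [hspec] at hnorm
      simp only [Set.mem_setOf_eq, hfn]
      have : ((hn'.choose 0 : ℚ)) ^ 2 + (hn'.choose 1 : ℚ) ^ 2 = (x 0 : ℚ) ^ 2 + (x 1 : ℚ) ^ 2 := by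
        simpa [hxq] using hnorm
      exact_mod_cast this
    · intro n hn m hm hfe
      have hn' : ∃ y : Fin 2 → ℤ, (M ^ n).mulVec xq = fun i => (y i : ℚ) := hn
      have hm' : ∃ y : Fin 2 → ℤ, (M ^ m).mulVec xq = fun i => (y i : ℚ) := hm
      have hfn : f n = hn'.choose := by rw [hf]; exact dif_pos hn'
      have hfm : f m = hm'.choose := by rw [hf]; exact dif_pos hm'
      have : (M ^ n).mulVec xq = (M ^ m).mulVec xq := by
        rw [hn'.choose_spec, hm'.choose_spec, ← hfn, ← hfm, hfe]
      exact aux_orbit_inj M h11 h10 hrot hMord hxq0 this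
  obtain ⟨N, hN⟩ := hTfin.bddAbove
  refine ⟨N + 1, fun n hn hmem => ?_⟩
  have : n ≤ N := hN hmem
  omega

/-- Let `Aₑ, A_f` be 2×2 integer matrices with nonzero determinant such
that `M = Aₑ⁻¹·A_f` (over `ℚ`) is a rational rotation matrix of infinite order:
`M₀₀ = M₁₁`, `M₁₀ = −M₀₁`, `M₀₀² + M₀₁² = 1`, and `M^m ≠ 1` for every `m ≥ 1`. With
`A = Aₑ·ℤ²`, `B = A_f·ℤ²`, `φ : A ≃* B` with `φ (Aₑ·x) = A_f·x`, and `G*` the HNN extension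
of `ℤ²` with respect to `(A,B,φ)` (stable letter satisfying `t⁻¹·ι(v)·t = ι(φ v)` for
`v ∈ A`, realized as Mathlib's `HNNExtension _ B A φ.symm`): for every finite set `S` of
nonzero vectors of `ℤ²` there exists `g ∈ G*` with `g·ι(Aₑ·x)·g⁻¹ ∉ ι(A)` for all `x ∈ S`. -/
theorem hnn_extension_rational_rotation_conjugate_out_of_edge_subgroup
    (Ae Af : Matrix (Fin 2) (Fin 2) ℤ) (hAe : Ae.det ≠ 0) (hAf : Af.det ≠ 0)
    (M : Matrix (Fin 2) (Fin 2) ℚ)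
    (hMdef : M = (Ae.map (Int.cast : ℤ → ℚ))⁻¹ * Af.map (Int.cast : ℤ → ℚ))
    (hM11 : M 0 0 = M 1 1) (hM10 : M 1 0 = -M 0 1)
    (hMrot : M 0 0 ^ 2 + M 0 1 ^ 2 = 1)
    (hMord : ∀ m : ℕ, 1 ≤ m → M ^ m ≠ 1)
    (A B : Subgroup (Multiplicative (Fin 2 → ℤ)))
    (hA : ∀ v : Multiplicative (Fin 2 → ℤ), v ∈ A ↔ ∃ x : Fin 2 → ℤ, v = ofAdd (Ae.mulVec x))
    (hB : ∀ v : Multiplicative (Fin 2 → ℤ), v ∈ B ↔ ∃ x : Fin 2 → ℤ, v = ofAdd (Af.mulVec x))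
    (φ : A ≃* B)
    (hφ : ∀ (a : A) (x : Fin 2 → ℤ), (a : Multiplicative (Fin 2 → ℤ)) = ofAdd (Ae.mulVec x) →
      ((φ a : B) : Multiplicative (Fin 2 → ℤ)) = ofAdd (Af.mulVec x))
    (S : Finset (Fin 2 → ℤ)) (hS : ∀ x ∈ S, x ≠ 0) :
    ∃ g : HNNExtension (Multiplicative (Fin 2 → ℤ)) B A φ.symm,
      ∀ x ∈ S, g * HNNExtension.of (ofAdd (Ae.mulVec x)) * g⁻¹ ∉
        A.map (HNNExtension.of : Multiplicative (Fin 2 → ℤ) →*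
          HNNExtension (Multiplicative (Fin 2 → ℤ)) B A φ.symm) := by
    classical
  -- cast machinery
  set cv : (Fin 2 → ℤ) → (Fin 2 → ℚ) := fun v i => (v i : ℚ) with hcv
  have hcvinj : ∀ {v w : Fin 2 → ℤ}, cv v = cv w → v = w := by
    intro v w h
    funext i
    have h2 := congrFun h i
    simp only [hcv] at h2
    exact_mod_cast h2
  have hmapmul : ∀ (C : Matrix (Fin 2) (Fin 2) ℤ) (v : Fin 2 → ℤ),
      (C.map (Int.cast : ℤ → ℚ)).mulVec (cv v) = cv (C.mulVec v) := by
    intro C v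
    funext i
    exact (RingHom.map_mulVec (Int.castRingHom ℚ) C v i).symm
  have hdet : (Ae.map (Int.cast : ℤ → ℚ)).det ≠ 0 := by
    have h1 : (Ae.map (Int.cast : ℤ → ℚ)).det = ((Ae.det : ℤ) : ℚ) :=
      (RingHom.map_det (Int.castRingHom ℚ) Ae).symm
    rw [h1]
    exact_mod_cast hAe
  have hunit : IsUnit (Ae.map (Int.cast : ℤ → ℚ)) :=
    (Matrix.isUnit_iff_isUnit_det _).2 (isUnit_iff_ne_zero.2 hdet)
  have hAeM : Ae.map (Int.cast : ℤ → ℚ) * M = Af.map (Int.cast : ℤ → ℚ) := by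
    rw [hMdef, ← Matrix.mul_assoc, Matrix.mul_nonsing_inv _ (isUnit_iff_ne_zero.2 hdet),
      Matrix.one_mul]
  have hforw : ∀ y z : Fin 2 → ℤ, M.mulVec (cv y) = cv z → Af.mulVec y = Ae.mulVec z := by
    intro y z h
    apply hcvinj
    rw [← hmapmul, ← hmapmul, ← hAeM, ← Matrix.mulVec_mulVec, h]
  have hback : ∀ y z : Fin 2 → ℤ, Af.mulVec y = Ae.mulVec z → M.mulVec (cv y) = cv z := by
    intro y z h
    have hinj : Function.Injective (Ae.map (Int.cast : ℤ → ℚ)).mulVec :=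
      Matrix.mulVec_injective_iff_isUnit.2 hunit
    apply hinj
    rw [Matrix.mulVec_mulVec, hAeM, hmapmul, hmapmul, h]
  -- the uniform bound N
  have hbd : ∀ x : Fin 2 → ℤ, x ≠ 0 → ∃ Nx : ℕ, ∀ n, Nx ≤ n →
      ¬∃ y : Fin 2 → ℤ, (M ^ n).mulVec (cv x) = cv y := fun x hx =>
    aux_bound M hM11 hM10 hMrot hMord x hx
  set Nf : (Fin 2 → ℤ) → ℕ := fun x => if hx : x ≠ 0 then (hbd x hx).choose else 0 with hNf
  set N : ℕ := S.sup Nf + 1 with hNdef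
  have hNspec : ∀ x ∈ S, ¬∃ y : Fin 2 → ℤ, (M ^ N).mulVec (cv x) = cv y := by
    intro x hxS
    have hx0 := hS x hxS
    have h1 : Nf x = (hbd x hx0).choose := by rw [hNf]; simp [dif_pos hx0]
    apply (hbd x hx0).choose_spec N
    have h2 : Nf x ≤ S.sup Nf := Finset.le_sup hxS
    omega
  -- the pinch identity
  have hpinch : ∀ (y : Fin 2 → ℤ) (n : ℤ),
      (t : HNNExtension (Multiplicative (Fin 2 → ℤ)) B A φ.symm) ^ (-(n + 1)) *
          of (ofAdd (Ae.mulVec y)) * t ^ (n + 1)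
        = t ^ (-n) * of (ofAdd (Af.mulVec y)) * t ^ n := by
    intro y n
    have hmem : ofAdd (Ae.mulVec y) ∈ A := (hA _).2 ⟨y, rfl⟩
    have hval : ((φ.symm.symm ⟨ofAdd (Ae.mulVec y), hmem⟩ : B) : Multiplicative (Fin 2 → ℤ))
        = ofAdd (Af.mulVec y) := by
      rw [MulEquiv.symm_symm]
      exact hφ ⟨_, hmem⟩ y rfl
    have h1 := equiv_symm_eq_conj (φ := φ.symm) (⟨ofAdd (Ae.mulVec y), hmem⟩ : A)
    rw [hval] at h1
    have h2 : (t : HNNExtension (Multiplicative (Fin 2 → ℤ)) B A φ.symm)⁻¹ *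
        of (ofAdd (Ae.mulVec y)) * t = of (ofAdd (Af.mulVec y)) := by
      rw [h1]
    have h3 : (t : HNNExtension (Multiplicative (Fin 2 → ℤ)) B A φ.symm) ^ (-(n + 1)) *
        of (ofAdd (Ae.mulVec y)) * t ^ (n + 1)
        = t ^ (-n) * ((t⁻¹ * of (ofAdd (Ae.mulVec y)) * t)) * t ^ n := by
      group
    rw [h3, h2]
  refine ⟨(t : HNNExtension (Multiplicative (Fin 2 → ℤ)) B A φ.symm) ^ (-(N : ℤ)), ?_⟩
  intro x hxS hmemMap
  have hx0 : x ≠ 0 := hS x hxS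
  have hPN : ¬∃ y : Fin 2 → ℤ, (M ^ N).mulVec (cv x) = cv y := hNspec x hxS
  have hex : ∃ n, ¬∃ y : Fin 2 → ℤ, (M ^ n).mulVec (cv x) = cv y := ⟨N, hPN⟩
  have hk : ¬∃ y : Fin 2 → ℤ, (M ^ (Nat.find hex)).mulVec (cv x) = cv y := Nat.find_spec hex
  set k := Nat.find hex with hkdef
  have hklt : ∀ j, j < k → ∃ y : Fin 2 → ℤ, (M ^ j).mulVec (cv x) = cv y := by
    intro j hj
    have := Nat.find_min hex hj
    exact not_not.1 this
  have hkN : k ≤ N := Nat.find_le hPN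
  have hkpos : 1 ≤ k := by
    rcases Nat.eq_zero_or_pos k with h0 | h
    · exfalso
      apply hk
      refine ⟨x, ?_⟩
      rw [h0, pow_zero, Matrix.one_mulVec]
    · exact h
  choose yy hyy using hklt
  -- conjugation claim
  have claim : ∀ j (hj : j < k),
      (t : HNNExtension (Multiplicative (Fin 2 → ℤ)) B A φ.symm) ^ (-(N : ℤ)) *
          of (ofAdd (Ae.mulVec x)) * t ^ (N : ℤ)
        = t ^ (-((N : ℤ) - j)) * of (ofAdd (Ae.mulVec (yy j hj))) * t ^ ((N : ℤ) - j) := by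
    intro j
    induction j with
    | zero =>
      intro hj
      have h0 : yy 0 hj = x := hcvinj (by rw [← hyy 0 hj, pow_zero, Matrix.one_mulVec])
      rw [h0]
      norm_num
    | succ j ih =>
      intro hj
      have hj' : j < k := by omega
      have hrel : Af.mulVec (yy j hj') = Ae.mulVec (yy (j+1) hj) := by
        apply hforw
        rw [← hyy j hj', Matrix.mulVec_mulVec, ← pow_succ', hyy (j+1) hj]
      have step := hpinch (yy j hj') ((N : ℤ) - (j + 1))
      rw [ih hj']
      have e1 : -((N:ℤ) - j) = -(((N:ℤ) - ((j:ℤ) + 1)) + 1) := by ring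
      have e2 : ((N:ℤ) - j) = (((N:ℤ) - ((j:ℤ) + 1)) + 1) := by ring
      rw [e1, e2, step, hrel]
      norm_cast
  -- main equality
  have hkk' : k - 1 < k := by omega
  have main := claim (k-1) hkk'
  have step := hpinch (yy (k-1) hkk') ((N : ℤ) - k)
  have e1 : -((N:ℤ) - ((k : ℕ) - 1 : ℕ)) = -(((N:ℤ) - (k:ℤ)) + 1) := by
    have : (((k : ℕ) - 1 : ℕ) : ℤ) = (k : ℤ) - 1 := by omega
    rw [this]; ring
  have e2 : ((N:ℤ) - ((k : ℕ) - 1 : ℕ)) = (((N:ℤ) - (k:ℤ)) + 1) := by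
    have : (((k : ℕ) - 1 : ℕ) : ℤ) = (k : ℤ) - 1 := by omega
    rw [this]; ring
  rw [e1, e2, step] at main
  -- b ∉ A
  have hbA : ofAdd (Af.mulVec (yy (k-1) hkk')) ∉ A := by
    intro hmemA
    obtain ⟨z, hz⟩ := (hA _).1 hmemA
    apply hk
    refine ⟨z, ?_⟩
    have hz' : Af.mulVec (yy (k-1) hkk') = Ae.mulVec z := ofAdd.injective hz
    have hmz := hback _ z hz'
    rw [show k = (k-1) + 1 by omega, pow_succ', ← Matrix.mulVec_mulVec, hyy (k-1) hkk', hmz]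
  -- convert the membership hypothesis
  have hginv : ((t : HNNExtension (Multiplicative (Fin 2 → ℤ)) B A φ.symm) ^ (-(N : ℤ)))⁻¹
      = t ^ (N : ℤ) := by
    rw [← zpow_neg, neg_neg]
  rw [hginv] at hmemMap
  rw [main] at hmemMap
  rcases Nat.lt_or_ge k N with hlt | hge
  · obtain ⟨mm, hmm⟩ : ∃ mm : ℕ, (N:ℤ) - (k:ℤ) = (mm:ℤ) + 1 := ⟨N - k - 1, by omega⟩
    apply aux_britton (φ := φ.symm) (ofAdd (Af.mulVec (yy (k-1) hkk'))) hbA mm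
    have : -((N:ℤ) - (k:ℤ)) = -((mm:ℤ) + 1) := by rw [hmm]
    rw [this, hmm] at hmemMap
    obtain ⟨a, _, haeq⟩ := hmemMap
    exact ⟨a, haeq⟩
  · have hkN' : (k : ℤ) = (N : ℤ) := by omega
    rw [hkN'] at hmemMap
    simp only [sub_self, neg_zero, zpow_zero, one_mul, mul_one] at hmemMap
    obtain ⟨a, haA, haeq⟩ := hmemMap
    have : a = ofAdd (Af.mulVec (yy (k-1) hkk')) := HNNExtension.of_injective φ.symm haeq
    rw [this] at haA
    exact hbA haA
end
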